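/- arXiv:2203.02614 — 3 statements merged into one kernel-verified Lean document; each statement's English description precedes it below -/
import Mathlib

section
/- In the forgetting process, the expected size of the memory after n steps is at least (n+1)/4. Formally, starting with S = {0} and inserting n i.i.d. uniform [0,1] points where each insertion removes the current minimum of S if the new point exceeds it, the expectation of |S| after n insertions is at least (n+1)/4. -/
open MeasureTheory ProbabilityTheory Finset

noncomputable section

/-- One step of the forgetting process: the new point `x` joins `S`; if `x` is strictly
larger than the current minimum of `S`, that minimum is removed. -/
def forgetStep (S : Finset ℝ) (x : ℝ) : Finset ℝ :=
  if h : S.Nonempty then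
    if S.min' h < x then insert x (S.erase (S.min' h)) else insert x S
  else insert x S

/-- The memory after `n` steps, starting from the set `T`, with inputs `xs 0, xs 1, …`. -/
def forgetMem (T : Finset ℝ) (xs : ℕ → ℝ) : ℕ → Finset ℝ
  | 0 => T
  | n + 1 => forgetStep (forgetMem T xs n) (xs n)

/-- `sCount xs x ℓ` : number of elements of the memory lying in `[0, x]` after `ℓ` steps,
starting from `S = {0}`. -/
def sCount (xs : ℕ → ℝ) (x : ℝ) (ℓ : ℕ) : ℕ :=
  ((forgetMem {0} xs ℓ).filter (· ≤ x)).card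

/-- The branching weight `W(z,n) = Σ_{x ∈ S(z,n)} 1/(1-x)`, the sum over memory elements
strictly below `z` at time `n`. -/
def Wproc (xs : ℕ → ℝ) (z : ℝ) (n : ℕ) : ℝ :=
  ∑ x ∈ (forgetMem {0} xs n).filter (· < z), 1 / (1 - x)

/-- `Z(z,n) = Σ_{k=1}^n W(z,k)·1{W(z,k-1)=0}`. -/
def Zproc (xs : ℕ → ℝ) (z : ℝ) (n : ℕ) : ℝ :=
  ∑ k ∈ Finset.range n, if Wproc xs z k = 0 then Wproc xs z (k + 1) else 0

/-- `X(z,n) = W(z,n) - Z(z,n)`. -/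
def Xproc (xs : ℕ → ℝ) (z : ℝ) (n : ℕ) : ℝ :=
  Wproc xs z n - Zproc xs z n

/-- the minimum of the memory at time `n` (with junk value `0` if the memory were empty). -/
def mminProc (xs : ℕ → ℝ) (n : ℕ) : ℝ :=
  (forgetMem {0} xs n).min.untopD 0

/-- the critical point `z₀ = 1 - 1/e`. -/
def critPoint : ℝ := 1 - (Real.exp 1)⁻¹

/-- The σ-algebra generated by the first `n` inputs `X 0, …, X (n-1)`. -/
def natSigma {Ω : Type*} [MeasurableSpace Ω] (X : ℕ → Ω → ℝ) (n : ℕ) : MeasurableSpace Ω :=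
  ⨆ i ∈ Finset.range n, MeasurableSpace.comap (X i) inferInstance

/-- The natural filtration `F_n = σ(x_1, …, x_n)` of the input sequence. -/
def natFilt {Ω : Type*} [m0 : MeasurableSpace Ω] (X : ℕ → Ω → ℝ)
    (hX : ∀ i, Measurable (X i)) : Filtration ℕ m0 where
  seq n := natSigma X n
  mono' n m hnm := biSup_mono fun i hi => Finset.mem_range.2 ((Finset.mem_range.1 hi).trans_le hnm)
  le' n := iSup₂_le fun i _ => measurable_iff_comap_le.1 (hX i)

/-- The input sequence is i.i.d. uniform on `[0,1]`. -/
def IsUnifIID {Ω : Type*} [MeasurableSpace Ω] (μ : Measure Ω) (X : ℕ → Ω → ℝ) : Prop :=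
  (∀ i, Measurable (X i)) ∧
    iIndepFun X μ ∧
    ∀ i, Measure.map (X i) μ = volume.restrict (Set.Icc (0 : ℝ) 1)

end

noncomputable section

/-- padded sorted vector insert -/
def sIns (v : ℕ → ℝ) (x : ℝ) : ℕ → ℝ :=
  fun i => if i = 0 then min (v 0) x else max (v (i-1)) (min (v i) x)

def vStep (u : ℕ → ℝ) (x : ℝ) : ℕ → ℝ :=
  if u 0 < x then sIns (fun i => u (i+1)) x else sIns u x

def padTwo : ℕ → ℝ := fun i => if i = 0 then 0 else 2

def Ufun : ℕ → (ℕ → ℝ) → ℕ → ℝ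
  | 0, _ => padTwo
  | k+1, xs => vStep (Ufun k xs) (xs k)

structure MRep (S : Finset ℝ) (u : ℕ → ℝ) : Prop where
  mono : ∀ i j, i < j → j < S.card → u i < u j
  mem : ∀ i, i < S.card → u i ∈ S
  pad : ∀ i, S.card ≤ i → u i = 2

lemma sIns_eq (v : ℕ → ℝ) (k : ℕ) (x : ℝ)
    (hmono : ∀ i j, i < j → j < k → v i < v j)
    (hpad : ∀ i, k ≤ i → v i = 2)
    (hne : ∀ i, i < k → v i ≠ x) (hx2 : x < 2) :
    ∃ j, j ≤ k ∧ (∀ i, i < j → v i < x) ∧ (∀ i, j ≤ i → i < k → x < v i) ∧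
      (∀ i, i < j → sIns v x i = v i) ∧ sIns v x j = x ∧
      (∀ i, j < i → sIns v x i = v (i-1)) := by
  classical
  have hex : ∃ m, ¬ (m < k ∧ v m < x) := ⟨k, by simp⟩
  set j := Nat.find hex with hj
  have hPj : ¬ (j < k ∧ v j < x) := Nat.find_spec hex
  have hjk : j ≤ k := Nat.find_le (show ¬ (k < k ∧ v k < x) by simp)
  have hlt : ∀ i, i < j → i < k ∧ v i < x := by
    intro i hi
    have := Nat.find_min hex hi
    exact not_not.mp this
  have hgt : ∀ i, j ≤ i → i < k → x < v i := by
    intro i hji hik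
    have hjk' : j < k := lt_of_le_of_lt hji hik
    have hxj : x < v j := by
      have h1 : ¬ v j < x := fun hh => hPj ⟨hjk', hh⟩
      rcases lt_or_gt_of_ne (hne j hjk') with h | h
      · exact absurd h h1
      · exact h
    rcases eq_or_lt_of_le hji with rfl | h
    · exact hxj
    · exact lt_trans hxj (hmono j i h hik)
  have hge2 : ∀ i, k ≤ i → x < v i := fun i hi => by rw [hpad i hi]; exact hx2
  have hxvi : ∀ i, j ≤ i → x < v i := by
    intro i hji
    rcases lt_or_ge i k with h | h
    · exact hgt i hji h
    · exact hge2 i h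
  refine ⟨j, hjk, fun i hi => (hlt i hi).2, hgt, ?_, ?_, ?_⟩
  · intro i hi
    rcases Nat.eq_zero_or_pos i with rfl | hpos
    · simp only [sIns, if_pos rfl]
      exact min_eq_left (le_of_lt (hlt 0 hi).2)
    · have h1 : sIns v x i = max (v (i-1)) (min (v i) x) := by
        simp [sIns, Nat.pos_iff_ne_zero.mp hpos]
      rw [h1, min_eq_left (le_of_lt (hlt i hi).2),
        max_eq_right (le_of_lt (hmono (i-1) i (by omega) (hlt i hi).1))]
  · rcases Nat.eq_zero_or_pos j with hz | hpos
    · rw [hz]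
      simp only [sIns, if_pos rfl]
      exact min_eq_right (le_of_lt (hxvi 0 (by omega)))
    · have h1 : sIns v x j = max (v (j-1)) (min (v j) x) := by
        simp [sIns, Nat.pos_iff_ne_zero.mp hpos]
      rw [h1, min_eq_right (le_of_lt (hxvi j le_rfl)),
        max_eq_right (le_of_lt (hlt (j-1) (by omega)).2)]
  · intro i hi
    have hpos : i ≠ 0 := by omega
    have h1 : sIns v x i = max (v (i-1)) (min (v i) x) := by simp [sIns, hpos]
    rw [h1, min_eq_right (le_of_lt (hxvi i (by omega)))]
    rcases lt_or_ge (i-1) j with h | h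
    · -- then i - 1 = j is impossible... i > j so i-1 ≥ j
      omega
    · exact max_eq_left (le_of_lt (hxvi (i-1) h))

lemma rep_insert {T : Finset ℝ} {u : ℕ → ℝ} {x : ℝ} (h : MRep T u)
    (hbd : ∀ y ∈ T, y < 2) (hx2 : x < 2) (hxT : x ∉ T) :
    MRep (insert x T) (sIns u x) := by
  classical
  obtain ⟨j, hjk, hvx, hxv, w1, w2, w3⟩ := sIns_eq u T.card x h.mono h.pad
    (fun i hi hix => hxT (hix ▸ h.mem i hi)) hx2
  have hcard : (insert x T).card = T.card + 1 := Finset.card_insert_of_notMem hxT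
  have hxvi : ∀ i, j ≤ i → i < T.card → x < u i := hxv
  constructor
  · intro a b hab hb
    rw [hcard] at hb
    -- compare positions of a,b relative to j
    rcases lt_trichotomy a j with ha | ha | ha
    · rw [w1 a ha]
      rcases lt_trichotomy b j with hb' | hb' | hb'
      · rw [w1 b hb']; exact h.mono a b hab (lt_of_lt_of_le hb' hjk)
      · subst hb'; rw [w2]; exact hvx a ha
      · rw [w3 b hb']
        exact h.mono a (b-1) (by omega) (by omega)
    · subst ha; rw [w2, w3 b hab]
      exact hxvi (b-1) (by omega) (by omega)
    · rw [w3 a ha, w3 b (lt_trans ha hab)]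
      exact h.mono (a-1) (b-1) (by omega) (by omega)
  · intro i hi
    rw [hcard] at hi
    rcases lt_trichotomy i j with h' | h' | h'
    · rw [w1 i h']; exact Finset.mem_insert_of_mem (h.mem i (lt_of_lt_of_le h' hjk))
    · rw [h', w2]; exact Finset.mem_insert_self x T
    · rw [w3 i h']; exact Finset.mem_insert_of_mem (h.mem (i-1) (by omega))
  · intro i hi
    rw [hcard] at hi
    rw [w3 i (by omega)]
    exact h.pad (i-1) (by omega)

lemma MRep.image (h : MRep S u) : (Finset.range S.card).image u = S := by
  have hsub : (Finset.range S.card).image u ⊆ S := by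
    intro y hy
    obtain ⟨i, hi, rfl⟩ := Finset.mem_image.mp hy
    exact h.mem i (Finset.mem_range.mp hi)
  have hinj : Set.InjOn u (Finset.range S.card) := by
    intro a ha b hb hab
    rcases lt_trichotomy a b with h' | h' | h'
    · exact absurd hab (ne_of_lt (h.mono a b h' (Finset.mem_range.mp (Finset.mem_coe.mp hb))))
    · exact h'
    · exact absurd hab.symm (ne_of_lt (h.mono b a h' (Finset.mem_range.mp (Finset.mem_coe.mp ha))))
  have hcard : ((Finset.range S.card).image u).card = S.card := by
    rw [Finset.card_image_of_injOn hinj, Finset.card_range]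
  exact Finset.eq_of_subset_of_card_le hsub (le_of_eq hcard.symm)

lemma MRep.sum (h : MRep S u) (f : ℝ → ℝ) :
    ∑ y ∈ S, f y = ∑ i ∈ Finset.range S.card, f (u i) := by
  conv_lhs => rw [← h.image]
  rw [Finset.sum_image]
  intro a ha b hb hab
  rcases lt_trichotomy a b with h' | h' | h'
  · exact absurd hab (ne_of_lt (h.mono a b h' (Finset.mem_range.mp hb)))
  · exact h'
  · exact absurd hab.symm (ne_of_lt (h.mono b a h' (Finset.mem_range.mp ha)))

lemma MRep.min' (h : MRep S u) (hne : S.Nonempty) : u 0 = S.min' hne := by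
  have hc : 0 < S.card := Finset.card_pos.mpr hne
  apply le_antisymm
  · apply Finset.le_min'
    intro y hy
    have : y ∈ (Finset.range S.card).image u := by rw [h.image]; exact hy
    obtain ⟨i, hi, rfl⟩ := Finset.mem_image.mp this
    rcases Nat.eq_zero_or_pos i with rfl | hpos
    · exact le_rfl
    · exact le_of_lt (h.mono 0 i hpos (Finset.mem_range.mp hi))
  · exact Finset.min'_le S (u 0) (h.mem 0 hc)



lemma forgetStep_subset (S : Finset ℝ) (x : ℝ) : forgetStep S x ⊆ insert x S := by
  unfold forgetStep
  split_ifs with h1 h2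
  · exact Finset.insert_subset_insert x (Finset.erase_subset _ S)
  · exact Finset.Subset.refl _
  · exact Finset.Subset.refl _

lemma rep_step {S : Finset ℝ} {u : ℕ → ℝ} {x : ℝ} (h : MRep S u)
    (hS : ∀ y ∈ S, y ∈ Set.Ico (0:ℝ) 1) (hne : S.Nonempty)
    (hx : x ∈ Set.Ioo (0:ℝ) 1) (hxS : x ∉ S) :
    MRep (forgetStep S x) (vStep u x) ∧
    (forgetStep S x).card = S.card + (if x ≤ u 0 then 1 else 0) ∧
    (∑ y ∈ forgetStep S x, (1-y))
      = (∑ y ∈ S, (1-y)) + (1-x) - (if u 0 < x then 1 else 0) * (1 - u 0) ∧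
    (∀ y ∈ forgetStep S x, y ∈ Set.Ico (0:ℝ) 1) := by
  classical
  have hm0 : u 0 = S.min' hne := h.min' hne
  have hmS : S.min' hne ∈ S := S.min'_mem hne
  have hcpos : 0 < S.card := Finset.card_pos.mpr hne
  have hbd : ∀ y ∈ S, y < 2 := fun y hy => lt_trans (hS y hy).2 (by norm_num)
  have hx2 : x < (2:ℝ) := lt_trans hx.2 (by norm_num)
  by_cases hc : S.min' hne < x
  · have hstep : forgetStep S x = insert x (S.erase (S.min' hne)) := by
      unfold forgetStep; rw [dif_pos hne, if_pos hc]
    have hvstep : vStep u x = sIns (fun i => u (i+1)) x := by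
      unfold vStep; rw [if_pos (hm0 ▸ hc)]
    set m := S.min' hne
    have hrepT : MRep (S.erase m) (fun i => u (i+1)) := by
      constructor
      · intro i j hij hj
        rw [Finset.card_erase_of_mem hmS] at hj
        exact h.mono (i+1) (j+1) (by omega) (by omega)
      · intro i hi
        rw [Finset.card_erase_of_mem hmS] at hi
        refine Finset.mem_erase.mpr ⟨?_, h.mem (i+1) (by omega)⟩
        have := h.mono 0 (i+1) (by omega) (by omega)
        rw [hm0] at this
        exact (ne_of_lt this).symm
      · intro i hi
        rw [Finset.card_erase_of_mem hmS] at hi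
        exact h.pad (i+1) (by omega)
    have hxT : x ∉ S.erase m := fun hmem => hxS (Finset.mem_of_mem_erase hmem)
    have hrep : MRep (forgetStep S x) (vStep u x) := by
      rw [hstep, hvstep]
      exact rep_insert hrepT (fun y hy => hbd y (Finset.mem_of_mem_erase hy)) hx2 hxT
    have hif1 : (if x ≤ u 0 then 1 else 0) = 0 := by
      rw [if_neg]; rw [hm0]; exact not_le.mpr hc
    have hif2 : (if u 0 < x then (1:ℝ) else 0) = 1 := by
      rw [if_pos]; rw [hm0]; exact hc
    refine ⟨hrep, ?_, ?_, ?_⟩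
    · rw [hstep, Finset.card_insert_of_notMem hxT, Finset.card_erase_of_mem hmS, hif1]
      omega
    · rw [hstep, Finset.sum_insert hxT, Finset.sum_erase_eq_sub hmS, hif2, hm0]
      ring
    · intro y hy
      rcases Finset.mem_insert.mp (hstep ▸ hy) with rfl | hy'
      · exact ⟨le_of_lt hx.1, hx.2⟩
      · exact hS y (Finset.mem_of_mem_erase hy')
  · have hstep : forgetStep S x = insert x S := by
      unfold forgetStep; rw [dif_pos hne, if_neg hc]
    have hvstep : vStep u x = sIns u x := by
      unfold vStep; rw [if_neg (hm0 ▸ hc)]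
    have hrep : MRep (forgetStep S x) (vStep u x) := by
      rw [hstep, hvstep]
      exact rep_insert h hbd hx2 hxS
    have hif1 : (if x ≤ u 0 then 1 else 0) = 1 := by
      rw [if_pos]; rw [hm0]; exact le_of_not_gt hc
    have hif2 : (if u 0 < x then (1:ℝ) else 0) = 0 := by
      rw [if_neg]; rw [hm0]; exact hc
    refine ⟨hrep, ?_, ?_, ?_⟩
    · rw [hstep, Finset.card_insert_of_notMem hxS, hif1]
    · rw [hstep, Finset.sum_insert hxS, hif2]
      ring
    · intro y hy
      rcases Finset.mem_insert.mp (hstep ▸ hy) with rfl | hy'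
      · exact ⟨le_of_lt hx.1, hx.2⟩
      · exact hS y hy'

def Good (n : ℕ) (xs : ℕ → ℝ) : Prop :=
  ∀ i, i < n → xs i ∈ Set.Ioo (0:ℝ) 1 ∧ ∀ j, j < i → xs j ≠ xs i

lemma inv_main {n : ℕ} {xs : ℕ → ℝ} (hg : Good n xs) :
    ∀ k, k ≤ n →
      MRep (forgetMem {0} xs k) (Ufun k xs) ∧
      (∀ y ∈ forgetMem {0} xs k, y ∈ Set.Ico (0:ℝ) 1) ∧
      (forgetMem {0} xs k).Nonempty ∧
      (∀ y ∈ forgetMem {0} xs k, y = 0 ∨ ∃ j, j < k ∧ y = xs j) ∧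
      (forgetMem {0} xs k).card ≤ k + 1 := by
  intro k
  induction k with
  | zero =>
    intro _
    have hM : forgetMem {0} xs 0 = {0} := rfl
    refine ⟨?_, ?_, ?_, ?_, ?_⟩
    · rw [hM]
      constructor
      · intro i j hij hj
        simp at hj
        omega
      · intro i hi
        simp at hi
        simp [hi, Ufun, padTwo]
      · intro i hi
        simp at hi
        simp [Ufun, padTwo]
        omega
    · intro y hy
      rw [hM] at hy
      simp at hy
      simp [hy]
    · rw [hM]; exact Finset.singleton_nonempty 0
    · intro y hy
      rw [hM] at hy
      simp at hy
      exact Or.inl hy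
    · rw [hM]; simp
  | succ k ih =>
    intro hk
    obtain ⟨hrep, hS, hne, hprov, hcard⟩ := ih (by omega)
    have hxk : xs k ∈ Set.Ioo (0:ℝ) 1 := (hg k (by omega)).1
    have hxS : xs k ∉ forgetMem {0} xs k := by
      intro hmem
      rcases hprov _ hmem with h0 | ⟨j, hj, hej⟩
      · exact absurd (h0 ▸ hxk).1 (lt_irrefl 0)
      · exact (hg k (by omega)).2 j hj hej.symm
    obtain ⟨hrep', hcard', _, hS'⟩ := rep_step hrep hS hne hxk hxS
    have hMk : forgetMem {0} xs (k+1) = forgetStep (forgetMem {0} xs k) (xs k) := rfl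
    have hU : Ufun (k+1) xs = vStep (Ufun k xs) (xs k) := rfl
    refine ⟨hMk ▸ hU ▸ hrep', hMk ▸ hS', ?_, ?_, ?_⟩
    · rw [hMk]
      unfold forgetStep
      split_ifs <;> exact Finset.insert_nonempty _ _
    · intro y hy
      rw [hMk] at hy
      rcases Finset.mem_insert.mp (forgetStep_subset _ _ hy) with rfl | hy'
      · exact Or.inr ⟨k, by omega, rfl⟩
      · rcases hprov y hy' with h0 | ⟨j, hj, hej⟩
        · exact Or.inl h0
        · exact Or.inr ⟨j, by omega, hej⟩
    · rw [hMk, hcard']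
      split_ifs <;> omega

lemma filter_range_eq {c N : ℕ} (h : c ≤ N) :
    (Finset.range N).filter (· < c) = Finset.range c := by
  ext i
  simp only [Finset.mem_filter, Finset.mem_range]
  omega

lemma rep_card_formula {S : Finset ℝ} {u : ℕ → ℝ} {N : ℕ} (h : MRep S u)
    (hS : ∀ y ∈ S, y ∈ Set.Ico (0:ℝ) 1) (hc : S.card ≤ N) :
    ((S.card : ℝ)) = ∑ i ∈ Finset.range N, if u i < 2 then (1:ℝ) else 0 := by
  have hiff : ∀ i, (u i < 2 ↔ i < S.card) := by
    intro i
    constructor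
    · intro hui
      by_contra hge
      rw [h.pad i (by omega)] at hui
      exact lt_irrefl 2 hui
    · intro hi
      have := (hS _ (h.mem i hi)).2
      linarith
  have h1 : ∀ i ∈ Finset.range N, (if u i < 2 then (1:ℝ) else 0) = (if i < S.card then (1:ℝ) else 0) := by
    intro i _
    simp only [hiff i]
  rw [Finset.sum_congr rfl h1, ← Finset.sum_filter, filter_range_eq hc]
  simp

lemma rep_phi_formula {S : Finset ℝ} {u : ℕ → ℝ} {N : ℕ} (h : MRep S u)
    (hS : ∀ y ∈ S, y ∈ Set.Ico (0:ℝ) 1) (hc : S.card ≤ N) :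
    (∑ y ∈ S, (1 - y)) = ∑ i ∈ Finset.range N, if u i < 2 then 1 - u i else 0 := by
  have hiff : ∀ i, (u i < 2 ↔ i < S.card) := by
    intro i
    constructor
    · intro hui
      by_contra hge
      rw [h.pad i (by omega)] at hui
      exact lt_irrefl 2 hui
    · intro hi
      have := (hS _ (h.mem i hi)).2
      linarith
  have h1 : ∀ i ∈ Finset.range N, (if u i < 2 then 1 - u i else 0) = (if i < S.card then 1 - u i else 0) := by
    intro i _
    simp only [hiff i]
  rw [Finset.sum_congr rfl h1, ← Finset.sum_filter, filter_range_eq hc, h.sum (fun y => 1 - y)]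

lemma Ufun_min_mem {n : ℕ} {xs : ℕ → ℝ} (hg : Good n xs) {k : ℕ} (hk : k ≤ n) :
    Ufun k xs 0 ∈ Set.Ico (0:ℝ) 1 := by
  obtain ⟨hrep, hS, hne, _, _⟩ := inv_main hg k hk
  exact hS _ (hrep.mem 0 (Finset.card_pos.mpr hne))

lemma det_card_step {n : ℕ} {xs : ℕ → ℝ} (hg : Good n xs) {k : ℕ} (hk : k < n) :
    ((forgetMem {0} xs (k+1)).card : ℝ)
      = ((forgetMem {0} xs k).card : ℝ) + (if xs k ≤ Ufun k xs 0 then 1 else 0) := by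
  obtain ⟨hrep, hS, hne, hprov, _⟩ := inv_main hg k (by omega)
  have hxk : xs k ∈ Set.Ioo (0:ℝ) 1 := (hg k hk).1
  have hxS : xs k ∉ forgetMem {0} xs k := by
    intro hmem
    rcases hprov _ hmem with h0 | ⟨j, hj, hej⟩
    · exact absurd (h0 ▸ hxk).1 (lt_irrefl 0)
    · exact (hg k hk).2 j hj hej.symm
  obtain ⟨_, hcard', _, _⟩ := rep_step hrep hS hne hxk hxS
  have hMk : forgetMem {0} xs (k+1) = forgetStep (forgetMem {0} xs k) (xs k) := rfl
  rw [hMk, hcard']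
  split_ifs <;> push_cast <;> ring

lemma det_phi_step {n : ℕ} {xs : ℕ → ℝ} (hg : Good n xs) {k : ℕ} (hk : k < n) :
    (∑ y ∈ forgetMem {0} xs (k+1), (1 - y))
      = (∑ y ∈ forgetMem {0} xs k, (1 - y)) + (1 - xs k)
        - (if Ufun k xs 0 < xs k then 1 else 0) * (1 - Ufun k xs 0) := by
  obtain ⟨hrep, hS, hne, hprov, _⟩ := inv_main hg k (by omega)
  have hxk : xs k ∈ Set.Ioo (0:ℝ) 1 := (hg k hk).1
  have hxS : xs k ∉ forgetMem {0} xs k := by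
    intro hmem
    rcases hprov _ hmem with h0 | ⟨j, hj, hej⟩
    · exact absurd (h0 ▸ hxk).1 (lt_irrefl 0)
    · exact (hg k hk).2 j hj hej.symm
  obtain ⟨_, _, hphi', _⟩ := rep_step hrep hS hne hxk hxS
  exact hphi'

lemma det_card_eq {n : ℕ} {xs : ℕ → ℝ} (hg : Good n xs) {k : ℕ} (hk : k ≤ n) :
    ((forgetMem {0} xs k).card : ℝ)
      = ∑ i ∈ Finset.range (n+1), if Ufun k xs i < 2 then (1:ℝ) else 0 := by
  obtain ⟨hrep, hS, _, _, hcard⟩ := inv_main hg k hk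
  exact rep_card_formula hrep hS (by omega)

lemma det_phi_eq {n : ℕ} {xs : ℕ → ℝ} (hg : Good n xs) {k : ℕ} (hk : k ≤ n) :
    (∑ y ∈ forgetMem {0} xs k, (1 - y))
      = ∑ i ∈ Finset.range (n+1), if Ufun k xs i < 2 then 1 - Ufun k xs i else 0 := by
  obtain ⟨hrep, hS, _, _, hcard⟩ := inv_main hg k hk
  exact rep_phi_formula hrep hS (by omega)

lemma det_phi_nonneg {n : ℕ} {xs : ℕ → ℝ} (hg : Good n xs) {k : ℕ} (hk : k ≤ n) :
    0 ≤ ∑ y ∈ forgetMem {0} xs k, (1 - y) := by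
  obtain ⟨_, hS, _, _, _⟩ := inv_main hg k hk
  refine Finset.sum_nonneg fun y hy => ?_
  have := (hS y hy).2
  linarith

lemma measurable_Ufun : ∀ k i, Measurable (fun xs : ℕ → ℝ => Ufun k xs i) := by
  intro k
  induction k with
  | zero => intro i; exact measurable_const
  | succ k ih =>
    have hsIns : ∀ (v : (ℕ → ℝ) → ℕ → ℝ), (∀ j, Measurable (fun xs => v xs j)) →
        ∀ i, Measurable (fun xs : ℕ → ℝ => sIns (v xs) (xs k) i) := by
      intro v hv i
      by_cases hi : i = 0
      · subst hi
        simp only [sIns, if_pos rfl]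
        exact (hv 0).min (measurable_pi_apply k)
      · simp only [sIns, if_neg hi]
        exact (hv (i-1)).max ((hv i).min (measurable_pi_apply k))
    intro i
    have : (fun xs : ℕ → ℝ => Ufun (k+1) xs i)
        = fun xs => if Ufun k xs 0 < xs k then sIns (fun j => Ufun k xs (j+1)) (xs k) i
            else sIns (Ufun k xs) (xs k) i := by
      funext xs
      show vStep (Ufun k xs) (xs k) i = _
      unfold vStep
      rw [ite_apply]
    rw [this]
    apply Measurable.ite
    · exact measurableSet_lt (ih 0) (measurable_pi_apply k)
    · exact hsIns (fun xs j => Ufun k xs (j+1)) (fun j => ih (j+1)) i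
    · exact hsIns (fun xs => Ufun k xs) ih i

lemma Ufun_congr : ∀ (k : ℕ) (xs ys : ℕ → ℝ), (∀ i, i < k → xs i = ys i) →
    Ufun k xs = Ufun k ys := by
  intro k
  induction k with
  | zero => intro xs ys _; rfl
  | succ k ih =>
    intro xs ys hagree
    have h1 : Ufun k xs = Ufun k ys := ih xs ys (fun i hi => hagree i (by omega))
    show vStep (Ufun k xs) (xs k) = vStep (Ufun k ys) (ys k)
    rw [h1, hagree k (by omega)]

def unif : Measure ℝ := volume.restrict (Set.Icc (0:ℝ) 1)

instance unif_prob : IsProbabilityMeasure unif := by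
  constructor
  rw [unif, Measure.restrict_apply MeasurableSet.univ, Set.univ_inter, Real.volume_Icc]
  norm_num

section Prob

variable {Ω : Type*} [MeasurableSpace Ω] {μ : Measure Ω} [IsProbabilityMeasure μ]
  {X : ℕ → Ω → ℝ}

lemma meas_seq (hm : ∀ i, Measurable (X i)) : Measurable (fun ω i => X i ω) :=
  measurable_pi_lambda _ hm

lemma meas_mk (hm : ∀ i, Measurable (X i)) (k i : ℕ) :
    Measurable (fun ω => Ufun k (fun j => X j ω) i) :=
  (measurable_Ufun k i).comp (meas_seq hm)

lemma indep_mk (hX : IsUnifIID μ X) (k : ℕ) :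
    IndepFun (fun ω => Ufun k (fun j => X j ω) 0) (X k) μ := by
  obtain ⟨hmeas, hind, _⟩ := hX
  have h1 := hind.indepFun_finset (Finset.range k) {k} (by simp) hmeas
  let G : ((↥(Finset.range k)) → ℝ) → ℝ :=
    fun w => Ufun k (fun i => if h : i ∈ Finset.range k then w ⟨i, h⟩ else 0) 0
  have hG : Measurable G := by
    apply (measurable_Ufun k 0).comp
    apply measurable_pi_lambda
    intro i
    by_cases h : i ∈ Finset.range k
    · simp only [dif_pos h]
      exact measurable_pi_apply _
    · simp only [dif_neg h]
      exact measurable_const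
  let E : ((↥({k}:Finset ℕ)) → ℝ) → ℝ := fun w => w ⟨k, Finset.mem_singleton_self k⟩
  have hE : Measurable E := measurable_pi_apply _
  have h2 := h1.comp hG hE
  have hgeq : (G ∘ fun ω (i : ↥(Finset.range k)) => X i ω)
      = fun ω => Ufun k (fun j => X j ω) 0 := by
    funext ω
    show Ufun k (fun i => if h : i ∈ Finset.range k then X i ω else 0) 0 = _
    exact congrFun (Ufun_congr k _ _ (fun i hi => by simp [Finset.mem_range.mpr hi])) 0
  have heeq : (E ∘ fun ω (i : ↥({k}:Finset ℕ)) => X i ω) = X k := rfl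
  rw [hgeq, heeq] at h2
  exact h2

lemma law_pair (hX : IsUnifIID μ X) (k : ℕ) :
    μ.map (fun ω => (Ufun k (fun j => X j ω) 0, X k ω))
      = (μ.map (fun ω => Ufun k (fun j => X j ω) 0)).prod unif := by
  have h := (indepFun_iff_map_prod_eq_prod_map_map
    (meas_mk hX.1 k 0).aemeasurable (hX.1 k).aemeasurable).mp (indep_mk hX k)
  rw [h, hX.2.2 k]
  rfl

lemma exp_pair (hX : IsUnifIID μ X) (k : ℕ) (g : ℝ × ℝ → ℝ) (hg : Measurable g)
    (C : ℝ)
    (hbd : ∀ᵐ p ∂((μ.map (fun ω => Ufun k (fun j => X j ω) 0)).prod unif), ‖g p‖ ≤ C) :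
    ∫ ω, g (Ufun k (fun j => X j ω) 0, X k ω) ∂μ
      = ∫ y, ∫ x, g (y, x) ∂unif ∂(μ.map (fun ω => Ufun k (fun j => X j ω) 0)) := by
  have hmk := meas_mk hX.1 k 0
  have hpair : AEMeasurable (fun ω => (Ufun k (fun j => X j ω) 0, X k ω)) μ :=
    (hmk.prodMk (hX.1 k)).aemeasurable
  haveI : IsProbabilityMeasure (μ.map (fun ω => Ufun k (fun j => X j ω) 0)) :=
    Measure.isProbabilityMeasure_map hmk.aemeasurable
  have hint : Integrable g ((μ.map (fun ω => Ufun k (fun j => X j ω) 0)).prod unif) :=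
    Integrable.mono' (integrable_const C) hg.aestronglyMeasurable hbd
  rw [← integral_map hpair hg.aestronglyMeasurable, law_pair hX k, integral_prod g hint]

lemma ae_good (hX : IsUnifIID μ X) (n : ℕ) : ∀ᵐ ω ∂μ, Good n (fun j => X j ω) := by
  have hioo : ∀ i, ∀ᵐ ω ∂μ, X i ω ∈ Set.Ioo (0:ℝ) 1 := by
    intro i
    rw [ae_iff]
    have hpre : {ω | ¬ X i ω ∈ Set.Ioo (0:ℝ) 1} = X i ⁻¹' (Set.Ioo (0:ℝ) 1)ᶜ := rfl
    rw [hpre, ← Measure.map_apply (hX.1 i) (measurableSet_Ioo.compl), hX.2.2 i,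
      Measure.restrict_apply measurableSet_Ioo.compl, Set.inter_comm, ← Set.diff_eq]
    rw [measure_diff Set.Ioo_subset_Icc_self measurableSet_Ioo.nullMeasurableSet
      (by rw [Real.volume_Ioo]; exact ENNReal.ofReal_ne_top)]
    rw [Real.volume_Icc, Real.volume_Ioo]
    simp
  have hne : ∀ i j : ℕ, j ≠ i → ∀ᵐ ω ∂μ, X j ω ≠ X i ω := by
    intro i j hij
    rw [ae_iff]
    have hdiag : MeasurableSet {p : ℝ × ℝ | p.1 = p.2} :=
      measurableSet_eq_fun measurable_fst measurable_snd
    have hpre : {ω | ¬ X j ω ≠ X i ω} = (fun ω => (X j ω, X i ω)) ⁻¹' {p : ℝ × ℝ | p.1 = p.2} := by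
      ext ω; simp
    have hind : IndepFun (X j) (X i) μ := hX.2.1.indepFun hij
    have hmap : μ.map (fun ω => (X j ω, X i ω)) = unif.prod unif := by
      rw [(indepFun_iff_map_prod_eq_prod_map_map (hX.1 j).aemeasurable
        (hX.1 i).aemeasurable).mp hind, hX.2.2 j, hX.2.2 i]
      rfl
    rw [hpre, ← Measure.map_apply ((hX.1 j).prodMk (hX.1 i)) hdiag, hmap,
      Measure.prod_apply hdiag]
    have hslice : ∀ x : ℝ, (Prod.mk x ⁻¹' {p : ℝ × ℝ | p.1 = p.2}) = {x} := by
      intro x; ext y; simp [eq_comm]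
    have hz : ∀ x : ℝ, unif (Prod.mk x ⁻¹' {p : ℝ × ℝ | p.1 = p.2}) = 0 := by
      intro x
      rw [hslice x, unif, Measure.restrict_apply (measurableSet_singleton x)]
      exact measure_mono_null Set.inter_subset_left Real.volume_singleton
    simp only [hz]
    simp
  unfold Good
  rw [ae_all_iff]
  intro i
  by_cases hi : i < n
  · have h2 : ∀ᵐ ω ∂μ, ∀ j, j < i → X j ω ≠ X i ω := by
      rw [ae_all_iff]
      intro j
      by_cases hj : j < i
      · filter_upwards [hne i j (by omega)] with ω h _
        exact h
      · exact Filter.Eventually.of_forall (fun ω h => absurd h hj)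
    filter_upwards [hioo i, h2] with ω h1 h2 _
    exact ⟨h1, h2⟩
  · exact Filter.Eventually.of_forall (fun ω h => absurd h hi)

lemma mk_ae_mem (hX : IsUnifIID μ X) {n k : ℕ} (hk : k ≤ n) :
    ∀ᵐ ω ∂μ, Ufun k (fun j => X j ω) 0 ∈ Set.Icc (0:ℝ) 1 := by
  filter_upwards [ae_good hX n] with ω hg
  have := Ufun_min_mem hg hk
  exact ⟨this.1, le_of_lt this.2⟩

lemma map_mk_ae (hX : IsUnifIID μ X) {n k : ℕ} (hk : k ≤ n) :
    ∀ᵐ y ∂(μ.map (fun ω => Ufun k (fun j => X j ω) 0)), y ∈ Set.Icc (0:ℝ) 1 :=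
  (ae_map_iff (meas_mk hX.1 k 0).aemeasurable measurableSet_Icc).mpr (mk_ae_mem hX hk)

lemma exp_E3 (hX : IsUnifIID μ X) (k : ℕ) : ∫ ω, X k ω ∂μ = 1/2 := by
  have h1 : ∫ ω, X k ω ∂μ = ∫ y, y ∂(μ.map (X k)) :=
    (integral_map (hX.1 k).aemeasurable aestronglyMeasurable_id).symm
  rw [h1, hX.2.2 k]
  rw [MeasureTheory.integral_Icc_eq_integral_Ioc,
    ← intervalIntegral.integral_of_le (by norm_num : (0:ℝ) ≤ 1)]
  rw [integral_id]
  norm_num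

lemma exp_E1 (hX : IsUnifIID μ X) {n k : ℕ} (hk : k ≤ n) :
    ∫ ω, (if X k ω ≤ Ufun k (fun j => X j ω) 0 then (1:ℝ) else 0) ∂μ
      = ∫ ω, Ufun k (fun j => X j ω) 0 ∂μ := by
  have hmk := meas_mk hX.1 k 0
  set g : ℝ × ℝ → ℝ := fun p => if p.2 ≤ p.1 then (1:ℝ) else 0 with hgdef
  have hg : Measurable g :=
    Measurable.ite (measurableSet_le measurable_snd measurable_fst)
      measurable_const measurable_const
  have hbd : ∀ᵐ p ∂((μ.map (fun ω => Ufun k (fun j => X j ω) 0)).prod unif), ‖g p‖ ≤ 1 := by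
    refine Filter.Eventually.of_forall fun p => ?_
    rw [hgdef]
    simp only [Real.norm_eq_abs]
    split_ifs <;> simp
  have h0 := exp_pair hX k g hg 1 hbd
  have h1 : ∀ y : ℝ, ∫ x, g (y, x) ∂unif = (unif (Set.Iic y)).toReal := by
    intro y
    have he : (fun x => g (y, x)) = (Set.Iic y).indicator (fun _ => (1:ℝ)) := by
      funext x
      simp [hgdef, Set.indicator_apply, Set.mem_Iic]
    rw [he, integral_indicator_const (1:ℝ) measurableSet_Iic, smul_eq_mul, mul_one, measureReal_def]
  have h2 : ∫ y, ∫ x, g (y, x) ∂unif ∂(μ.map (fun ω => Ufun k (fun j => X j ω) 0))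
      = ∫ y, y ∂(μ.map (fun ω => Ufun k (fun j => X j ω) 0)) := by
    apply integral_congr_ae
    filter_upwards [map_mk_ae hX hk] with y hy
    rw [h1 y, unif, Measure.restrict_apply measurableSet_Iic]
    have hseteq : Set.Iic y ∩ Set.Icc (0:ℝ) 1 = Set.Icc 0 y := by
      ext z
      simp only [Set.mem_inter_iff, Set.mem_Iic, Set.mem_Icc]
      exact ⟨fun h => ⟨h.2.1, h.1⟩, fun h => ⟨h.2, h.1, h.2.trans hy.2⟩⟩
    rw [hseteq, Real.volume_Icc, ENNReal.toReal_ofReal (by linarith [hy.1])]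
    ring
  have h3 : ∫ y, y ∂(μ.map (fun ω => Ufun k (fun j => X j ω) 0))
      = ∫ ω, Ufun k (fun j => X j ω) 0 ∂μ :=
    integral_map hmk.aemeasurable aestronglyMeasurable_id
  calc ∫ ω, (if X k ω ≤ Ufun k (fun j => X j ω) 0 then (1:ℝ) else 0) ∂μ
      = ∫ ω, g (Ufun k (fun j => X j ω) 0, X k ω) ∂μ := rfl
    _ = _ := by rw [h0, h2, h3]

lemma exp_E2 (hX : IsUnifIID μ X) {n k : ℕ} (hk : k ≤ n) :
    ∫ ω, (if Ufun k (fun j => X j ω) 0 < X k ω then (1:ℝ) else 0)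
        * (1 - Ufun k (fun j => X j ω) 0) ∂μ
      = ∫ ω, (1 - Ufun k (fun j => X j ω) 0)^2 ∂μ := by
  have hmk := meas_mk hX.1 k 0
  set ρ := μ.map (fun ω => Ufun k (fun j => X j ω) 0) with hρ
  set g : ℝ × ℝ → ℝ := fun p => (if p.1 < p.2 then (1:ℝ) else 0) * (1 - p.1) with hgdef
  have hg : Measurable g :=
    (Measurable.ite (measurableSet_lt measurable_fst measurable_snd)
      measurable_const measurable_const).mul (measurable_const.sub measurable_fst)
  have hfst : ∀ᵐ p ∂(ρ.prod unif), p.1 ∈ Set.Icc (0:ℝ) 1 := by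
    apply ae_of_ae_map (measurable_fst.aemeasurable (μ := ρ.prod unif))
    rw [Measure.map_fst_prod]
    have : unif Set.univ = 1 := measure_univ
    rw [this, one_smul]
    exact map_mk_ae hX hk
  have hbd : ∀ᵐ p ∂(ρ.prod unif), ‖g p‖ ≤ 1 := by
    filter_upwards [hfst] with p hp
    rw [hgdef]
    simp only [Real.norm_eq_abs]
    split_ifs
    · rw [one_mul, abs_le]
      constructor <;> [linarith [hp.2]; linarith [hp.1]]
    · simp
  have h0 := exp_pair hX k g hg 1 hbd
  have h1 : ∀ y : ℝ, ∫ x, g (y, x) ∂unif = (unif (Set.Ioi y)).toReal * (1 - y) := by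
    intro y
    have he : (fun x => g (y, x)) = fun x => ((Set.Ioi y).indicator (fun _ => (1:ℝ)) x) * (1 - y) := by
      funext x
      simp [hgdef, Set.indicator_apply, Set.mem_Ioi]
    rw [he, integral_mul_const, integral_indicator_const (1:ℝ) measurableSet_Ioi,
      smul_eq_mul, mul_one, measureReal_def]
  have h2 : ∫ y, ∫ x, g (y, x) ∂unif ∂ρ = ∫ y, (1 - y)^2 ∂ρ := by
    apply integral_congr_ae
    filter_upwards [map_mk_ae hX hk] with y hy
    rw [h1 y, unif, Measure.restrict_apply measurableSet_Ioi]
    have hseteq : Set.Ioi y ∩ Set.Icc (0:ℝ) 1 = Set.Ioc y 1 := by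
      ext z
      simp only [Set.mem_inter_iff, Set.mem_Ioi, Set.mem_Icc, Set.mem_Ioc]
      exact ⟨fun h => ⟨h.1, h.2.2⟩, fun h => ⟨h.1, le_trans hy.1 (le_of_lt h.1), h.2⟩⟩
    rw [hseteq, Real.volume_Ioc, ENNReal.toReal_ofReal (by linarith [hy.2])]
    ring
  have h3 : ∫ y, (1 - y)^2 ∂ρ = ∫ ω, (1 - Ufun k (fun j => X j ω) 0)^2 ∂μ :=
    integral_map hmk.aemeasurable
      (((measurable_const.sub measurable_id).pow_const 2).aestronglyMeasurable)
  calc ∫ ω, (if Ufun k (fun j => X j ω) 0 < X k ω then (1:ℝ) else 0)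
        * (1 - Ufun k (fun j => X j ω) 0) ∂μ
      = ∫ ω, g (Ufun k (fun j => X j ω) 0, X k ω) ∂μ := rfl
    _ = _ := by rw [h0, ← hρ, h2, h3]

lemma int_card (hX : IsUnifIID μ X) {n k : ℕ} (hk : k ≤ n) :
    Integrable (fun ω => ((forgetMem {0} (fun j => X j ω) k).card : ℝ)) μ := by
  have hgood := ae_good hX n
  have hmeas : Measurable (fun ω =>
      ∑ i ∈ Finset.range (n+1), if Ufun k (fun j => X j ω) i < 2 then (1:ℝ) else 0) := by
    apply Finset.measurable_sum
    intro i _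
    exact Measurable.ite (measurableSet_lt (meas_mk hX.1 k i) measurable_const)
      measurable_const measurable_const
  have haeeq : (fun ω => ∑ i ∈ Finset.range (n+1),
      if Ufun k (fun j => X j ω) i < 2 then (1:ℝ) else 0)
      =ᵐ[μ] (fun ω => ((forgetMem {0} (fun j => X j ω) k).card : ℝ)) := by
    filter_upwards [hgood] with ω hg
    exact (det_card_eq hg hk).symm
  refine Integrable.congr ?_ haeeq
  apply Integrable.mono' (integrable_const ((n:ℝ)+1)) hmeas.aestronglyMeasurable
  refine Filter.Eventually.of_forall fun ω => ?_
  calc ‖∑ i ∈ Finset.range (n+1), if Ufun k (fun j => X j ω) i < 2 then (1:ℝ) else 0‖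
      ≤ ∑ i ∈ Finset.range (n+1), ‖if Ufun k (fun j => X j ω) i < 2 then (1:ℝ) else 0‖ :=
        norm_sum_le _ _
    _ ≤ ∑ _i ∈ Finset.range (n+1), (1:ℝ) := by
        refine Finset.sum_le_sum fun i _ => ?_
        rw [Real.norm_eq_abs]
        split_ifs <;> simp
    _ = (n:ℝ) + 1 := by simp

lemma int_phi (hX : IsUnifIID μ X) {n k : ℕ} (hk : k ≤ n) :
    Integrable (fun ω => ∑ y ∈ forgetMem {0} (fun j => X j ω) k, (1 - y)) μ := by
  have hgood := ae_good hX n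
  have hmeas : Measurable (fun ω =>
      ∑ i ∈ Finset.range (n+1),
        if Ufun k (fun j => X j ω) i < 2 then 1 - Ufun k (fun j => X j ω) i else 0) := by
    apply Finset.measurable_sum
    intro i _
    exact Measurable.ite (measurableSet_lt (meas_mk hX.1 k i) measurable_const)
      (measurable_const.sub (meas_mk hX.1 k i)) measurable_const
  have haeeq : (fun ω => ∑ i ∈ Finset.range (n+1),
      if Ufun k (fun j => X j ω) i < 2 then 1 - Ufun k (fun j => X j ω) i else 0)
      =ᵐ[μ] (fun ω => ∑ y ∈ forgetMem {0} (fun j => X j ω) k, (1 - y)) := by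
    filter_upwards [hgood] with ω hg
    exact (det_phi_eq hg hk).symm
  have hsm : AEStronglyMeasurable
      (fun ω => ∑ y ∈ forgetMem {0} (fun j => X j ω) k, (1 - y)) μ :=
    hmeas.aestronglyMeasurable.congr haeeq
  apply Integrable.mono' (integrable_const ((n:ℝ)+1)) hsm
  filter_upwards [hgood] with ω hg
  obtain ⟨_, hS, _, _, hcard⟩ := inv_main hg k hk
  calc ‖∑ y ∈ forgetMem {0} (fun j => X j ω) k, (1 - y)‖
      ≤ ∑ y ∈ forgetMem {0} (fun j => X j ω) k, ‖1 - y‖ := norm_sum_le _ _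
    _ ≤ ∑ _y ∈ forgetMem {0} (fun j => X j ω) k, (1:ℝ) := by
        refine Finset.sum_le_sum fun y hy => ?_
        have := hS y hy
        rw [Real.norm_eq_abs, abs_le]
        constructor <;> [linarith [this.2]; linarith [this.1]]
    _ = ((forgetMem {0} (fun j => X j ω) k).card : ℝ) := by simp
    _ ≤ (n:ℝ) + 1 := by
        have : (forgetMem {0} (fun j => X j ω) k).card ≤ n + 1 := le_trans hcard (by omega)
        exact_mod_cast this

lemma int_mk (hX : IsUnifIID μ X) {n k : ℕ} (hk : k ≤ n) :
    Integrable (fun ω => Ufun k (fun j => X j ω) 0) μ := by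
  apply Integrable.mono' (integrable_const (1:ℝ)) (meas_mk hX.1 k 0).aestronglyMeasurable
  filter_upwards [mk_ae_mem hX hk] with ω h
  rw [Real.norm_eq_abs, abs_le]
  exact ⟨by linarith [h.1], h.2⟩

lemma int_mksq (hX : IsUnifIID μ X) {n k : ℕ} (hk : k ≤ n) :
    Integrable (fun ω => (1 - Ufun k (fun j => X j ω) 0)^2) μ := by
  apply Integrable.mono' (integrable_const (1:ℝ))
    (((measurable_const.sub (meas_mk hX.1 k 0)).pow_const 2).aestronglyMeasurable)
  filter_upwards [mk_ae_mem hX hk] with ω h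
  rw [Real.norm_eq_abs, abs_le]
  show -1 ≤ (1 - Ufun k (fun j => X j ω) 0)^2 ∧ (1 - Ufun k (fun j => X j ω) 0)^2 ≤ 1
  constructor <;> nlinarith [h.1, h.2]

lemma int_X (hX : IsUnifIID μ X) (k : ℕ) : Integrable (X k) μ := by
  apply Integrable.mono' (integrable_const (1:ℝ)) (hX.1 k).aestronglyMeasurable
  have : ∀ᵐ ω ∂μ, X k ω ∈ Set.Icc (0:ℝ) 1 := by
    apply ae_of_ae_map (hX.1 k).aemeasurable
    rw [hX.2.2 k]
    refine (MeasureTheory.ae_restrict_iff' measurableSet_Icc).mpr ?_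
    exact Filter.Eventually.of_forall fun x hx => hx
  filter_upwards [this] with ω h
  rw [Real.norm_eq_abs, abs_le]
  exact ⟨by linarith [h.1], h.2⟩

lemma int_A (hX : IsUnifIID μ X) (k : ℕ) :
    Integrable (fun ω => if X k ω ≤ Ufun k (fun j => X j ω) 0 then (1:ℝ) else 0) μ := by
  apply Integrable.mono' (integrable_const (1:ℝ))
  · exact (Measurable.ite (measurableSet_le (hX.1 k) (meas_mk hX.1 k 0))
      measurable_const measurable_const).aestronglyMeasurable
  · refine Filter.Eventually.of_forall fun ω => ?_
    rw [Real.norm_eq_abs]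
    split_ifs <;> simp

lemma int_B (hX : IsUnifIID μ X) {n k : ℕ} (hk : k ≤ n) :
    Integrable (fun ω => (if Ufun k (fun j => X j ω) 0 < X k ω then (1:ℝ) else 0)
      * (1 - Ufun k (fun j => X j ω) 0)) μ := by
  apply Integrable.mono' (integrable_const (1:ℝ))
  · exact ((Measurable.ite (measurableSet_lt (meas_mk hX.1 k 0) (hX.1 k))
      measurable_const measurable_const).mul
      (measurable_const.sub (meas_mk hX.1 k 0))).aestronglyMeasurable
  · filter_upwards [mk_ae_mem hX (n := n) hk] with ω h
    rw [Real.norm_eq_abs]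
    split_ifs
    · rw [one_mul, abs_le]
      constructor <;> [linarith [h.2]; linarith [h.1]]
    · simp

lemma exp_card_sum (hX : IsUnifIID μ X) (n : ℕ) :
    ∀ k, k ≤ n →
      ∫ ω, ((forgetMem {0} (fun j => X j ω) k).card : ℝ) ∂μ
        = 1 + ∑ j ∈ Finset.range k, ∫ ω, Ufun j (fun i => X i ω) 0 ∂μ := by
  intro k
  induction k with
  | zero =>
    intro _
    have : (fun ω => ((forgetMem {0} (fun j => X j ω) 0).card : ℝ)) = fun _ => (1:ℝ) := by
      funext ω
      show ((({0} : Finset ℝ).card : ℝ)) = 1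
      simp
    rw [this]
    simp
  | succ k ih =>
    intro hk
    have hstep : (fun ω => ((forgetMem {0} (fun j => X j ω) (k+1)).card : ℝ))
        =ᵐ[μ] (fun ω => ((forgetMem {0} (fun j => X j ω) k).card : ℝ)
          + (if X k ω ≤ Ufun k (fun j => X j ω) 0 then (1:ℝ) else 0)) := by
      filter_upwards [ae_good hX n] with ω hg
      exact det_card_step hg (by omega)
    rw [integral_congr_ae hstep,
      integral_add (int_card hX (by omega : k ≤ n)) (int_A hX k),
      exp_E1 hX (by omega : k ≤ n), ih (by omega),
      Finset.sum_range_succ]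
    ring

lemma exp_phi_sum (hX : IsUnifIID μ X) (n : ℕ) :
    ∀ k, k ≤ n →
      ∫ ω, (∑ y ∈ forgetMem {0} (fun j => X j ω) k, (1 - y)) ∂μ
        = 1 + (k:ℝ)/2 - ∑ j ∈ Finset.range k, ∫ ω, (1 - Ufun j (fun i => X i ω) 0)^2 ∂μ := by
  intro k
  induction k with
  | zero =>
    intro _
    have : (fun ω => ∑ y ∈ forgetMem {0} (fun j => X j ω) 0, (1 - y)) = fun _ => (1:ℝ) := by
      funext ω
      show (∑ y ∈ ({0} : Finset ℝ), (1 - y)) = 1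
      simp
    rw [this]
    simp
  | succ k ih =>
    intro hk
    have hstep : (fun ω => ∑ y ∈ forgetMem {0} (fun j => X j ω) (k+1), (1 - y))
        =ᵐ[μ] (fun ω => (∑ y ∈ forgetMem {0} (fun j => X j ω) k, (1 - y))
          + ((1 - X k ω) - (if Ufun k (fun j => X j ω) 0 < X k ω then (1:ℝ) else 0)
            * (1 - Ufun k (fun j => X j ω) 0))) := by
      filter_upwards [ae_good hX n] with ω hg
      rw [det_phi_step hg (by omega)]
      ring
    have hB := int_B hX (n := n) (show k ≤ n by omega)
    have hXk := int_X hX k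
    have h1 : Integrable (fun ω => 1 - X k ω) μ := (integrable_const 1).sub hXk
    have h1B : Integrable (fun ω => (1 - X k ω)
        - (if Ufun k (fun j => X j ω) 0 < X k ω then (1:ℝ) else 0)
          * (1 - Ufun k (fun j => X j ω) 0)) μ := h1.sub hB
    have hv1 : ∫ ω, (1 - X k ω) ∂μ = 1/2 := by
      rw [integral_sub (integrable_const 1) hXk, exp_E3 hX k]
      norm_num
    rw [integral_congr_ae hstep, integral_add (int_phi hX (show k ≤ n by omega)) h1B,
      integral_sub h1 hB, hv1, exp_E2 hX (show k ≤ n by omega), ih (by omega),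
      Finset.sum_range_succ]
    push_cast
    ring

lemma main_bound (hX : IsUnifIID μ X) (n : ℕ) :
    ((n : ℝ) + 1) / 4 ≤ ∫ ω, ((forgetMem {0} (fun i => X i ω) n).card : ℝ) ∂μ := by
  rcases Nat.eq_zero_or_pos n with rfl | hn
  · rw [exp_card_sum hX 0 0 le_rfl]
    norm_num
  · have hN1 : (1:ℝ) ≤ (n:ℝ) := by exact_mod_cast hn
    have hNpos : (0:ℝ) < (n:ℝ) := by linarith
    set t : ℝ := 3*((n:ℝ)+1)/(4*(n:ℝ)) with htdef
    have ht : 0 < t := by rw [htdef]; positivity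
    have h2t : (0:ℝ) < 2*t := by linarith
    have hcard : ∫ ω, ((forgetMem {0} (fun i => X i ω) n).card : ℝ) ∂μ
        = 1 + ∑ j ∈ Finset.range n, ∫ ω, Ufun j (fun i => X i ω) 0 ∂μ :=
      exp_card_sum hX n n le_rfl
    have hphi : ∫ ω, (∑ y ∈ forgetMem {0} (fun i => X i ω) n, (1 - y)) ∂μ
        = 1 + (n:ℝ)/2 - ∑ j ∈ Finset.range n, ∫ ω, (1 - Ufun j (fun i => X i ω) 0)^2 ∂μ :=
      exp_phi_sum hX n n le_rfl
    have hphin : 0 ≤ ∫ ω, (∑ y ∈ forgetMem {0} (fun i => X i ω) n, (1 - y)) ∂μ := by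
      apply integral_nonneg_of_ae
      filter_upwards [ae_good hX n] with ω hg
      exact det_phi_nonneg hg le_rfl
    have hbsum : ∑ j ∈ Finset.range n, ∫ ω, (1 - Ufun j (fun i => X i ω) 0)^2 ∂μ
        ≤ 1 + (n:ℝ)/2 := by
      linarith [hphi ▸ hphin]
    have hak : ∀ j ∈ Finset.range n,
        1 - t/2 - (1/(2*t)) * (∫ ω, (1 - Ufun j (fun i => X i ω) 0)^2 ∂μ)
          ≤ ∫ ω, Ufun j (fun i => X i ω) 0 ∂μ := by
      intro j hj
      have hjn : j ≤ n := le_of_lt (Finset.mem_range.mp hj)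
      have hint1 : Integrable (fun ω => 1 - Ufun j (fun i => X i ω) 0) μ :=
        (integrable_const 1).sub (int_mk hX hjn)
      have hint2 : Integrable
          (fun ω => t/2 + (1/(2*t)) * (1 - Ufun j (fun i => X i ω) 0)^2) μ :=
        (integrable_const (t/2)).add ((int_mksq hX hjn).const_mul (1/(2*t)))
      have hmono := integral_mono hint1 hint2 (fun ω => by
        show 1 - Ufun j (fun i => X i ω) 0
          ≤ t/2 + (1/(2*t)) * (1 - Ufun j (fun i => X i ω) 0)^2
        rw [← sub_nonneg]
        have hexp : t/2 + (1/(2*t)) * (1 - Ufun j (fun i => X i ω) 0)^2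
            - (1 - Ufun j (fun i => X i ω) 0)
            = (1/(2*t)) * (1 - Ufun j (fun i => X i ω) 0 - t)^2 := by
          field_simp
          ring
        rw [hexp]
        positivity)
      rw [integral_sub (integrable_const 1) (int_mk hX hjn),
        integral_add (integrable_const (t/2)) ((int_mksq hX hjn).const_mul (1/(2*t))),
        integral_const_mul, integral_const, integral_const, measureReal_def, measure_univ] at hmono
      simp only [ENNReal.toReal_one, smul_eq_mul, one_mul] at hmono
      linarith
    have hsum2 : (n:ℝ)*(1 - t/2)
        - (1/(2*t)) * (∑ j ∈ Finset.range n, ∫ ω, (1 - Ufun j (fun i => X i ω) 0)^2 ∂μ)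
        ≤ ∑ j ∈ Finset.range n, ∫ ω, Ufun j (fun i => X i ω) 0 ∂μ := by
      have h := Finset.sum_le_sum hak
      rw [Finset.sum_sub_distrib, Finset.sum_sub_distrib, Finset.sum_const,
        Finset.card_range, nsmul_eq_mul, ← Finset.mul_sum, ← Finset.sum_div,
        Finset.sum_const, Finset.card_range, nsmul_eq_mul] at h
      calc (n:ℝ)*(1 - t/2)
          - (1/(2*t)) * (∑ j ∈ Finset.range n, ∫ ω, (1 - Ufun j (fun i => X i ω) 0)^2 ∂μ)
          = (n:ℝ)*1 - ((n:ℝ)*t)/2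
            - (1/(2*t)) * (∑ j ∈ Finset.range n, ∫ ω, (1 - Ufun j (fun i => X i ω) 0)^2 ∂μ) := by
            ring
        _ ≤ _ := h
    have hdiv : (1/(2*t)) * (∑ j ∈ Finset.range n, ∫ ω, (1 - Ufun j (fun i => X i ω) 0)^2 ∂μ)
        ≤ (1/(2*t)) * (1 + (n:ℝ)/2) :=
      mul_le_mul_of_nonneg_left hbsum (div_nonneg zero_le_one (by linarith))
    have hkey : ((n:ℝ) + 1)/4 ≤ 1 + (n:ℝ)*(1 - t/2) - (1/(2*t)) * (1 + (n:ℝ)/2) := by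
      rw [← sub_nonneg]
      have hn0 : (n:ℝ) ≠ 0 := ne_of_gt hNpos
      have hn1 : (n:ℝ) + 1 ≠ 0 := by linarith
      have hexp : 1 + (n:ℝ)*(1 - t/2) - (1/(2*t)) * (1 + (n:ℝ)/2) - ((n:ℝ) + 1)/4
          = ((n:ℝ)^2 + 2*(n:ℝ) + 9) / (24*((n:ℝ)+1)) := by
        rw [htdef]
        field_simp
        ring
      rw [hexp]
      apply div_nonneg <;> nlinarith
    rw [hcard]
    linarith

end Prob


end

/-- In the forgetting process starting from `S = {0}` with `n` i.i.d.
uniform `[0,1]` insertions, the expected size of the memory after `n` steps is at least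
`(n+1)/4`. -/
theorem expected_memory_size_ge {Ω : Type*} [MeasurableSpace Ω] (μ : Measure Ω)
    [IsProbabilityMeasure μ] (X : ℕ → Ω → ℝ) (hX : IsUnifIID μ X) (n : ℕ) :
    ((n : ℝ) + 1) / 4 ≤ ∫ ω, ((forgetMem {0} (fun i => X i ω) n).card : ℝ) ∂μ := by
  exact main_bound hX n
end

section
/- Conditional drift of the branching weight: for 0 < z < 1, on the event that the memory contains at least one element below z at time n, the conditional expectation of W(z,n+1) − W(z,n) given the history up to time n equals −log(1−z) − 1. In particular, for z₀ = 1 − 1/e this drift is zero. -/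
open MeasureTheory ProbabilityTheory Finset

noncomputable section

def hzF (z y : ℝ) : ℝ := if y < z then (1 - y)⁻¹ else 0

lemma hzF_nonneg {z : ℝ} (hz1 : z < 1) (y : ℝ) : 0 ≤ hzF z y := by
  unfold hzF; split_ifs with h
  · have : 0 < 1 - y := by linarith
    positivity
  · exact le_refl 0

lemma hzF_le {z : ℝ} (hz1 : z < 1) (y : ℝ) : hzF z y ≤ (1 - z)⁻¹ := by
  have h0 : 0 < 1 - z := by linarith
  unfold hzF; split_ifs with h
  · exact inv_anti₀ h0 (by linarith)
  · positivity

lemma measurable_hzF (z : ℝ) : Measurable (hzF z) := by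
  unfold hzF
  exact Measurable.ite measurableSet_Iio ((measurable_const.sub measurable_id).inv) measurable_const

lemma forgetStep_nonempty (S : Finset ℝ) (x : ℝ) : (forgetStep S x).Nonempty := by
  unfold forgetStep; split_ifs <;> exact Finset.insert_nonempty _ _

lemma forgetMem_nonempty (xs : ℕ → ℝ) (k : ℕ) : (forgetMem {0} xs k).Nonempty := by
  cases k with
  | zero => exact ⟨0, by simp [forgetMem]⟩
  | succ k => exact forgetStep_nonempty _ _

def mK (xs : ℕ → ℝ) (k : ℕ) : ℝ := (forgetMem {0} xs k).min' (forgetMem_nonempty xs k)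

lemma mem_forgetStep {S : Finset ℝ} (hS : S.Nonempty) (x a : ℝ) :
    a ∈ forgetStep S x ↔ a = x ∨ (a ∈ S ∧ (¬ S.min' hS < x ∨ a ≠ S.min' hS)) := by
  unfold forgetStep
  rw [dif_pos hS]
  split_ifs with h
  · simp only [Finset.mem_insert, Finset.mem_erase]; tauto
  · simp only [Finset.mem_insert]; tauto

lemma sum_forgetStep (h : ℝ → ℝ) {S : Finset ℝ} (hS : S.Nonempty) (x : ℝ) :
    ∑ y ∈ forgetStep S x, h y =
      (∑ y ∈ S, h y) + (if x ∈ S then 0 else h x)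
        - (if S.min' hS < x then h (S.min' hS) else 0) := by
  unfold forgetStep
  rw [dif_pos hS]
  set m := S.min' hS with hm
  have hmS : m ∈ S := S.min'_mem hS
  by_cases h1 : m < x
  · rw [if_pos h1, if_pos h1]
    have h3 := Finset.sum_erase_add S h hmS
    by_cases h2 : x ∈ S
    · have hxm : x ≠ m := ne_of_gt h1
      rw [Finset.insert_eq_self.2 (Finset.mem_erase.2 ⟨hxm, h2⟩), if_pos h2]
      linarith
    · rw [Finset.sum_insert (fun hc => h2 (Finset.mem_of_mem_erase hc)), if_neg h2]
      linarith
  · rw [if_neg h1, if_neg h1]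
    by_cases h2 : x ∈ S
    · rw [Finset.insert_eq_self.2 h2, if_pos h2]; ring
    · rw [Finset.sum_insert h2, if_neg h2]; ring

lemma forgetMem_congr {T : Finset ℝ} {xs ys : ℕ → ℝ} :
    ∀ k, (∀ i, i < k → xs i = ys i) → forgetMem T xs k = forgetMem T ys k
  | 0, _ => rfl
  | (k+1), h => by
      show forgetStep (forgetMem T xs k) (xs k) = forgetStep (forgetMem T ys k) (ys k)
      rw [forgetMem_congr k (fun i hi => h i (Nat.lt_succ_of_lt hi)), h k (Nat.lt_succ_self k)]

def aC (xs : ℕ → ℝ) : ℕ → ℝ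
  | 0 => 0
  | (j+1) => xs j

lemma measurable_aC (j : ℕ) : Measurable fun xs : ℕ → ℝ => aC xs j := by
  cases j with
  | zero => exact measurable_const
  | succ j => exact measurable_pi_apply j

lemma forgetMem_subset (xs : ℕ → ℝ) (k : ℕ) :
    forgetMem {0} xs k ⊆ (Finset.range (k+1)).image (aC xs) := by
  induction k with
  | zero =>
      intro y hy
      simp only [forgetMem, Finset.mem_singleton] at hy
      exact Finset.mem_image.2 ⟨0, by simp, by simp [aC, hy]⟩
  | succ k ih =>
      intro y hy
      have hstep : forgetStep (forgetMem {0} xs k) (xs k) ⊆ insert (xs k) (forgetMem {0} xs k) := by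
        unfold forgetStep
        split_ifs with h1 h2
        · exact Finset.insert_subset_insert _ (Finset.erase_subset _ _)
        · exact Finset.Subset.refl _
        · exact Finset.Subset.refl _
      rcases Finset.mem_insert.1 (hstep hy) with h | h
      · exact Finset.mem_image.2 ⟨k+1, Finset.mem_range.2 (by omega), by simp [aC, h.symm]⟩
      · exact Finset.image_subset_image (Finset.range_subset_range.2 (by omega)) (ih h)

lemma min'_lt_iff' {S : Finset ℝ} (hS : S.Nonempty) (t : ℝ) :
    S.min' hS < t ↔ ∃ y ∈ S, y < t :=
  ⟨fun h => ⟨_, S.min'_mem hS, h⟩, fun ⟨y, hy, hyt⟩ => lt_of_le_of_lt (S.min'_le y hy) hyt⟩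

lemma measurable_mK_of (k : ℕ)
    (hk : ∀ j, MeasurableSet {xs : ℕ → ℝ | aC xs j ∈ forgetMem {0} xs k}) :
    Measurable fun xs => mK xs k := by
  apply measurable_of_Iio
  intro t
  have heq : (fun xs => mK xs k) ⁻¹' Set.Iio t =
      ⋃ j ∈ Finset.range (k+1),
        ({xs : ℕ → ℝ | aC xs j ∈ forgetMem {0} xs k} ∩ {xs | aC xs j < t}) := by
    ext xs
    simp only [Set.mem_preimage, Set.mem_Iio, Set.mem_iUnion, Set.mem_inter_iff,
      Set.mem_setOf_eq, exists_prop]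
    constructor
    · intro h
      obtain ⟨y, hy, hyt⟩ := (min'_lt_iff' (forgetMem_nonempty xs k) t).1 h
      obtain ⟨j, hj, hja⟩ := Finset.mem_image.1 (forgetMem_subset xs k hy)
      exact ⟨j, hj, by rw [hja]; exact hy, by rw [hja]; exact hyt⟩
    · rintro ⟨j, hj, hmem, hlt⟩
      exact (min'_lt_iff' (forgetMem_nonempty xs k) t).2 ⟨aC xs j, hmem, hlt⟩
  rw [heq]
  exact MeasurableSet.biUnion (Finset.range (k+1)).countable_toSet
    (fun j _ => (hk j).inter ((measurable_aC j) measurableSet_Iio))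

lemma measurableSet_memSet : ∀ k j, MeasurableSet {xs : ℕ → ℝ | aC xs j ∈ forgetMem {0} xs k} := by
  intro k
  induction k with
  | zero =>
      intro j
      have : {xs : ℕ → ℝ | aC xs j ∈ forgetMem {0} xs 0} = (fun xs => aC xs j) ⁻¹' {0} := by
        ext xs; simp [forgetMem]
      rw [this]
      exact (measurable_aC j) (measurableSet_singleton 0)
  | succ k ih =>
      have hm : Measurable fun xs => mK xs k := measurable_mK_of k ih
      intro j
      have heq : {xs : ℕ → ℝ | aC xs j ∈ forgetMem {0} xs (k+1)} =
          {xs : ℕ → ℝ | aC xs j = xs k} ∪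
            ({xs : ℕ → ℝ | aC xs j ∈ forgetMem {0} xs k} ∩
              ({xs : ℕ → ℝ | ¬ mK xs k < xs k} ∪ {xs : ℕ → ℝ | aC xs j ≠ mK xs k})) := by
        ext xs
        simp only [Set.mem_setOf_eq, Set.mem_union, Set.mem_inter_iff]
        exact mem_forgetStep (forgetMem_nonempty xs k) (xs k) (aC xs j)
      rw [heq]
      refine MeasurableSet.union (measurableSet_eq_fun (measurable_aC j) (measurable_pi_apply k))
        (MeasurableSet.inter (ih j) (MeasurableSet.union ?_ ?_))
      · exact (measurableSet_lt hm (measurable_pi_apply k)).compl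
      · exact (measurableSet_eq_fun (measurable_aC j) hm).compl

lemma measurable_mK (k : ℕ) : Measurable fun xs => mK xs k :=
  measurable_mK_of k (measurableSet_memSet k)


lemma forgetMem_eq_image (xs : ℕ → ℝ) (k : ℕ) :
    forgetMem {0} xs k =
      ((Finset.range (k+1)).filter
        (fun j => aC xs j ∈ forgetMem {0} xs k ∧ ∀ i ∈ Finset.range j, aC xs i ≠ aC xs j)).image
        (aC xs) := by
  ext y
  constructor
  · intro hy
    have hex : ∃ j, aC xs j = y := by
      obtain ⟨j, _, hja⟩ := Finset.mem_image.1 (forgetMem_subset xs k hy)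
      exact ⟨j, hja⟩
    obtain ⟨j, hj, hja⟩ := Finset.mem_image.1 (forgetMem_subset xs k hy)
    have hj0 : aC xs (Nat.find hex) = y := Nat.find_spec hex
    have hj0le : Nat.find hex ∈ Finset.range (k+1) :=
      Finset.mem_range.2 (lt_of_le_of_lt (Nat.find_min' hex hja) (Finset.mem_range.1 hj))
    refine Finset.mem_image.2 ⟨Nat.find hex, Finset.mem_filter.2 ⟨hj0le, by rw [hj0]; exact hy,
      fun i hi heq => Nat.find_min hex (Finset.mem_range.1 hi) (heq.trans hj0)⟩, hj0⟩
  · intro hy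
    obtain ⟨j, hj, hja⟩ := Finset.mem_image.1 hy
    exact hja ▸ (Finset.mem_filter.1 hj).2.1

lemma sum_forgetMem (h : ℝ → ℝ) (xs : ℕ → ℝ) (k : ℕ) :
    ∑ y ∈ forgetMem {0} xs k, h y =
      ∑ j ∈ Finset.range (k+1),
        if aC xs j ∈ forgetMem {0} xs k ∧ ∀ i ∈ Finset.range j, aC xs i ≠ aC xs j
        then h (aC xs j) else 0 := by
  have hinj : ∀ i ∈ (Finset.range (k+1)).filter
      (fun j => aC xs j ∈ forgetMem {0} xs k ∧ ∀ i ∈ Finset.range j, aC xs i ≠ aC xs j),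
      ∀ j ∈ (Finset.range (k+1)).filter
      (fun j => aC xs j ∈ forgetMem {0} xs k ∧ ∀ i ∈ Finset.range j, aC xs i ≠ aC xs j),
      aC xs i = aC xs j → i = j := by
    intro i hi j hj heq
    rcases lt_trichotomy i j with h1 | h1 | h1
    · exact absurd heq ((Finset.mem_filter.1 hj).2.2 i (Finset.mem_range.2 h1))
    · exact h1
    · exact absurd heq.symm ((Finset.mem_filter.1 hi).2.2 j (Finset.mem_range.2 h1))
  conv_lhs => rw [forgetMem_eq_image xs k]
  rw [Finset.sum_image hinj, Finset.sum_filter]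

lemma measurable_sumMem (h : ℝ → ℝ) (hh : Measurable h) (k : ℕ) :
    Measurable fun xs : ℕ → ℝ => ∑ y ∈ forgetMem {0} xs k, h y := by
  have : (fun xs : ℕ → ℝ => ∑ y ∈ forgetMem {0} xs k, h y) =
      fun xs => ∑ j ∈ Finset.range (k+1),
        if aC xs j ∈ forgetMem {0} xs k ∧ ∀ i ∈ Finset.range j, aC xs i ≠ aC xs j
        then h (aC xs j) else 0 := funext fun xs => sum_forgetMem h xs k
  rw [this]
  apply Finset.measurable_sum
  intro j _
  apply Measurable.ite _ (hh.comp (measurable_aC j)) measurable_const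
  have heq : {xs : ℕ → ℝ | aC xs j ∈ forgetMem {0} xs k ∧
      ∀ i ∈ Finset.range j, aC xs i ≠ aC xs j} =
      {xs : ℕ → ℝ | aC xs j ∈ forgetMem {0} xs k} ∩
        ⋂ (i : ℕ), {xs : ℕ → ℝ | i ∈ Finset.range j → aC xs i ≠ aC xs j} := by
    ext xs; simp [Set.mem_iInter]
  rw [heq]
  refine (measurableSet_memSet k j).inter (MeasurableSet.iInter fun i => ?_)
  by_cases hi : i ∈ Finset.range j
  · have : {xs : ℕ → ℝ | i ∈ Finset.range j → aC xs i ≠ aC xs j} =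
        {xs : ℕ → ℝ | aC xs i = aC xs j}ᶜ := by ext xs; simp [hi]
    rw [this]
    exact (measurableSet_eq_fun (measurable_aC i) (measurable_aC j)).compl
  · have : {xs : ℕ → ℝ | i ∈ Finset.range j → aC xs i ≠ aC xs j} = Set.univ := by
      ext xs; simp [hi]
    rw [this]; exact MeasurableSet.univ

lemma Wproc_eq_sum (xs : ℕ → ℝ) (z : ℝ) (k : ℕ) :
    Wproc xs z k = ∑ y ∈ forgetMem {0} xs k, hzF z y := by
  rw [Wproc, Finset.sum_filter]
  exact Finset.sum_congr rfl fun y _ => by simp [hzF, one_div]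

lemma measurable_Wproc (z : ℝ) (k : ℕ) : Measurable fun xs => Wproc xs z k := by
  have : (fun xs => Wproc xs z k) = fun xs => ∑ y ∈ forgetMem {0} xs k, hzF z y :=
    funext fun xs => Wproc_eq_sum xs z k
  rw [this]
  exact measurable_sumMem _ (measurable_hzF z) k

lemma Wproc_congr {xs ys : ℕ → ℝ} (z : ℝ) (k : ℕ) (h : ∀ i, i < k → xs i = ys i) :
    Wproc xs z k = Wproc ys z k := by
  rw [Wproc, Wproc, forgetMem_congr k h]

lemma min'_eq_of_eq {S T : Finset ℝ} (h : S = T) (hS : S.Nonempty) (hT : T.Nonempty) :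
    S.min' hS = T.min' hT := by subst h; rfl

lemma mK_congr {xs ys : ℕ → ℝ} (k : ℕ) (h : ∀ i, i < k → xs i = ys i) :
    mK xs k = mK ys k :=
  min'_eq_of_eq (forgetMem_congr k h) _ _

lemma Wdiff (z : ℝ) (xs : ℕ → ℝ) (k : ℕ) :
    Wproc xs z (k+1) - Wproc xs z k =
      (if xs k ∈ forgetMem {0} xs k then 0 else hzF z (xs k))
        - (if mK xs k < xs k then hzF z (mK xs k) else 0) := by
  rw [Wproc_eq_sum, Wproc_eq_sum]
  have hstep : forgetMem {0} xs (k+1) = forgetStep (forgetMem {0} xs k) (xs k) := rfl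
  rw [hstep, sum_forgetStep (hzF z) (forgetMem_nonempty xs k) (xs k)]
  show _ = _ - (if (forgetMem {0} xs k).min' (forgetMem_nonempty xs k) < xs k
      then hzF z ((forgetMem {0} xs k).min' (forgetMem_nonempty xs k)) else 0)
  ring

lemma Wdiff_bound {z : ℝ} (hz1 : z < 1) (xs : ℕ → ℝ) (k : ℕ) :
    |Wproc xs z (k+1) - Wproc xs z k| ≤ 2 * (1 - z)⁻¹ := by
  rw [Wdiff]
  have hc : (0:ℝ) ≤ (1 - z)⁻¹ := by
    have : 0 < 1 - z := by linarith
    positivity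
  have hA0 : 0 ≤ (if xs k ∈ forgetMem {0} xs k then 0 else hzF z (xs k)) := by
    split_ifs
    exacts [le_refl 0, hzF_nonneg hz1 _]
  have hA1 : (if xs k ∈ forgetMem {0} xs k then 0 else hzF z (xs k)) ≤ (1 - z)⁻¹ := by
    split_ifs
    exacts [hc, hzF_le hz1 _]
  have hB0 : 0 ≤ (if mK xs k < xs k then hzF z (mK xs k) else 0) := by
    split_ifs
    exacts [hzF_nonneg hz1 _, le_refl 0]
  have hB1 : (if mK xs k < xs k then hzF z (mK xs k) else 0) ≤ (1 - z)⁻¹ := by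
    split_ifs
    exacts [hzF_le hz1 _, hc]
  rw [abs_le]
  constructor <;> linarith


lemma step_formula {z : ℝ} (n : ℕ) (v : ℕ → ℝ) (x : ℝ) :
    Wproc (Function.update v n x) z (n+1) - Wproc v z n =
      (if x ∈ forgetMem {0} v n then 0 else hzF z x)
        - (if mK v n < x then hzF z (mK v n) else 0) := by
  have hagree : ∀ i, i < n → Function.update v n x i = v i :=
    fun i hi => Function.update_of_ne (Nat.ne_of_lt hi) _ _
  have h1 : Wproc v z n = Wproc (Function.update v n x) z n :=
    Wproc_congr z n (fun i hi => (hagree i hi).symm)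
  have h2 : forgetMem {0} (Function.update v n x) n = forgetMem {0} v n :=
    forgetMem_congr n hagree
  have h3 : mK (Function.update v n x) n = mK v n := mK_congr n hagree
  rw [h1, Wdiff z (Function.update v n x) n, Function.update_self, h2, h3]

lemma inner_integral {z : ℝ} (hz0 : 0 < z) (hz1 : z < 1) (n : ℕ) (v : ℕ → ℝ)
    (hv : ∀ i, i < n → v i ∈ Set.Ico (0:ℝ) 1) :
    ∫ x, (Wproc (Function.update v n x) z (n+1) - Wproc v z n)
        ∂(volume.restrict (Set.Icc (0:ℝ) 1))
      = -Real.log (1 - z) - (if mK v n < z then 1 else 0) := by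
  set ν := volume.restrict (Set.Icc (0:ℝ) 1) with hνdef
  haveI hν : IsProbabilityMeasure ν := ⟨by simp [hνdef, Real.volume_Icc]⟩
  set S := forgetMem {0} v n with hSdef
  have hSne : S.Nonempty := forgetMem_nonempty v n
  have hSsub : (S : Set ℝ) ⊆ Set.Ico (0:ℝ) 1 := by
    intro y hy
    obtain ⟨j, hj, hja⟩ := Finset.mem_image.1 (forgetMem_subset v n hy)
    cases j with
    | zero =>
        rw [← hja]; exact ⟨le_refl 0, zero_lt_one⟩
    | succ j =>
        rw [← hja]
        exact hv j (by have := Finset.mem_range.1 hj; omega)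
  set mv := mK v n with hmvdef
  have hmv : mv ∈ Set.Ico (0:ℝ) 1 := hSsub (S.min'_mem hSne)
  have hc : (0:ℝ) < (1 - z)⁻¹ := by
    have : 0 < 1 - z := by linarith
    positivity
  have hint1 : Integrable (fun x => if x ∈ S then 0 else hzF z x) ν := by
    refine Integrable.mono' (integrable_const ((1-z)⁻¹))
      ((Measurable.ite S.measurableSet measurable_const (measurable_hzF z)).aestronglyMeasurable)
      (Filter.Eventually.of_forall fun x => ?_)
    rw [Real.norm_eq_abs]
    split_ifs
    · simp [le_of_lt hc]
    · rw [abs_of_nonneg (hzF_nonneg hz1 _)]; exact hzF_le hz1 _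
  have hint2 : Integrable (fun x => if mv < x then hzF z mv else 0) ν := by
    refine Integrable.mono' (integrable_const ((1-z)⁻¹))
      ((Measurable.ite measurableSet_Ioi measurable_const measurable_const).aestronglyMeasurable)
      (Filter.Eventually.of_forall fun x => ?_)
    rw [Real.norm_eq_abs]
    split_ifs
    · rw [abs_of_nonneg (hzF_nonneg hz1 _)]; exact hzF_le hz1 _
    · simp [le_of_lt hc]
  have hrw : (fun x => Wproc (Function.update v n x) z (n+1) - Wproc v z n) =
      fun x => (if x ∈ S then 0 else hzF z x) - (if mv < x then hzF z mv else 0) :=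
    funext fun x => step_formula n v x
  rw [hrw, integral_sub hint1 hint2]
  have h1 : ∫ x, (if x ∈ S then 0 else hzF z x) ∂ν = ∫ x, hzF z x ∂ν := by
    apply integral_congr_ae
    have hS0 : ν (S : Set ℝ) = 0 := by
      rw [hνdef, Measure.restrict_apply S.measurableSet]
      exact measure_mono_null Set.inter_subset_left ((S.finite_toSet).measure_zero _)
    filter_upwards [measure_eq_zero_iff_ae_notMem.1 hS0] with x hx
    simp only [Finset.mem_coe] at hx
    rw [if_neg hx]
  have h2 : ∫ x, hzF z x ∂ν = -Real.log (1 - z) := by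
    have hind : (fun x => hzF z x) = Set.indicator (Set.Iio z) (fun x => (1-x)⁻¹) :=
      funext fun x => by simp [hzF, Set.indicator_apply, Set.mem_Iio]
    rw [hind, integral_indicator measurableSet_Iio, hνdef,
      Measure.restrict_restrict measurableSet_Iio]
    have hIco : Set.Iio z ∩ Set.Icc (0:ℝ) 1 = Set.Ico 0 z := by
      ext x
      simp only [Set.mem_inter_iff, Set.mem_Iio, Set.mem_Icc, Set.mem_Ico]
      constructor
      · rintro ⟨h1, h2, h3⟩; exact ⟨h2, h1⟩
      · rintro ⟨h1, h2⟩; exact ⟨h2, h1, by linarith⟩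
    rw [hIco]
    have hIcoInt : (∫ x in Set.Ico (0:ℝ) z, (1-x)⁻¹) = ∫ x in (0:ℝ)..z, (1-x)⁻¹ := by
      rw [intervalIntegral.integral_of_le (le_of_lt hz0),
        MeasureTheory.integral_Ioc_eq_integral_Ioo, MeasureTheory.integral_Ico_eq_integral_Ioo]
    rw [hIcoInt]
    have hcomp : (∫ x in (0:ℝ)..z, (1-x)⁻¹) = ∫ x in (1-z:ℝ)..(1-0:ℝ), x⁻¹ :=
      intervalIntegral.integral_comp_sub_left (fun x => x⁻¹) 1
    rw [hcomp]
    norm_num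
    rw [integral_inv (by
      intro hmem
      rw [Set.uIcc_of_le (by linarith : (1:ℝ) - z ≤ 1)] at hmem
      have := hmem.1; linarith)]
    rw [one_div, Real.log_inv]
  have h3 : ∫ x, (if mv < x then hzF z mv else 0) ∂ν = (if mv < z then 1 else 0) := by
    by_cases hmz : mv < z
    · have hind : (fun x => if mv < x then hzF z mv else 0) =
          Set.indicator (Set.Ioi mv) (fun _ => hzF z mv) :=
        funext fun x => by simp [Set.indicator_apply, Set.mem_Ioi]
      rw [hind, integral_indicator measurableSet_Ioi, setIntegral_const]
      have hν2 : ν (Set.Ioi mv) = ENNReal.ofReal (1 - mv) := by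
        rw [hνdef, Measure.restrict_apply measurableSet_Ioi]
        have : Set.Ioi mv ∩ Set.Icc (0:ℝ) 1 = Set.Ioc mv 1 := by
          ext x
          simp only [Set.mem_inter_iff, Set.mem_Ioi, Set.mem_Icc, Set.mem_Ioc]
          constructor
          · rintro ⟨h1, _, h3⟩; exact ⟨h1, h3⟩
          · rintro ⟨h1, h2⟩; exact ⟨h1, le_trans hmv.1 (le_of_lt h1), h2⟩
        rw [this, Real.volume_Ioc]
      have h1mv : (0:ℝ) < 1 - mv := by linarith [hmv.2]
      rw [measureReal_def, hν2, if_pos hmz, ENNReal.toReal_ofReal (le_of_lt h1mv), smul_eq_mul]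
      have : hzF z mv = (1 - mv)⁻¹ := if_pos hmz
      rw [this, mul_inv_cancel₀ (ne_of_gt h1mv)]
    · have h0 : hzF z mv = 0 := if_neg hmz
      simp [h0, hmz]
  rw [h1, h2, h3]


lemma measurable_G (z : ℝ) (n : ℕ) :
    Measurable fun p : (ℕ → ℝ) × ℝ =>
      Wproc (Function.update p.1 n p.2) z (n+1) - Wproc p.1 z n := by
  have hupd : Measurable fun p : (ℕ → ℝ) × ℝ => Function.update p.1 n p.2 := by
    apply measurable_pi_lambda
    intro i
    by_cases h : i = n
    · subst h
      simp only [Function.update_self]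
      exact measurable_snd
    · simp only [Function.update_of_ne h]
      exact (measurable_pi_apply i).comp measurable_fst
  exact ((measurable_Wproc z (n+1)).comp hupd).sub ((measurable_Wproc z n).comp measurable_fst)

lemma G_bound {z : ℝ} (hz1 : z < 1) (n : ℕ) (p : (ℕ → ℝ) × ℝ) :
    |Wproc (Function.update p.1 n p.2) z (n+1) - Wproc p.1 z n| ≤ 2 * (1 - z)⁻¹ := by
  have h1 : Wproc p.1 z n = Wproc (Function.update p.1 n p.2) z n :=
    Wproc_congr z n (fun i hi => (Function.update_of_ne (Nat.ne_of_lt hi) _ _).symm)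
  rw [h1]
  exact Wdiff_bound hz1 _ n

end

/-- Conditional drift of the branching weight: for `0 < z < 1`, on the event
that the memory contains an element below `z` at time `n` (i.e. `W(z,n) ≠ 0`), the conditional
expectation of `W(z,n+1) − W(z,n)` given `F_n` equals `−log(1−z) − 1`. In particular for
`z₀ = 1 − 1/e` this drift is zero. -/
theorem branching_weight_conditional_drift {Ω : Type*} [MeasurableSpace Ω] (μ : Measure Ω)
    [IsProbabilityMeasure μ] (X : ℕ → Ω → ℝ)
    (hmeas : ∀ i, Measurable (X i))
    (hindep : iIndepFun X μ)
    (hunif : ∀ i, Measure.map (X i) μ = volume.restrict (Set.Icc (0 : ℝ) 1))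
    (z : ℝ) (hz : z ∈ Set.Ioo (0 : ℝ) 1) (n : ℕ) :
    (∀ᵐ ω ∂μ, Wproc (fun i => X i ω) z n ≠ 0 →
        (μ[fun ω' => Wproc (fun i => X i ω') z (n + 1) - Wproc (fun i => X i ω') z n |
            natSigma X n]) ω = -Real.log (1 - z) - 1) ∧
      -Real.log (1 - critPoint) - 1 = 0 := by
  classical
  obtain ⟨hz0, hz1⟩ := hz
  constructor
  swap
  · rw [show (1:ℝ) - critPoint = (Real.exp 1)⁻¹ by rw [critPoint]; ring,
      Real.log_inv, Real.log_exp]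
    ring
  have hm : natSigma X n ≤ ‹MeasurableSpace Ω› :=
    iSup₂_le fun i _ => measurable_iff_comap_le.1 (hmeas i)
  -- ψ
  set ψ : Ω → ℕ → ℝ := fun ω i => if i < n then X i ω else 0 with hψdef
  have hψmeas : Measurable ψ := by
    apply measurable_pi_lambda
    intro i
    by_cases h : i < n
    · simpa [hψdef, h] using hmeas i
    · simp [hψdef, h]
  have hψm : Measurable[natSigma X n] ψ := by
    apply @measurable_pi_lambda Ω ℕ (fun _ => ℝ) (natSigma X n) _ _
    intro i
    by_cases h : i < n
    · simp only [hψdef, if_pos h]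
      have hle : MeasurableSpace.comap (X i) inferInstance ≤ natSigma X n :=
        le_iSup₂ (f := fun (i : ℕ) (_ : i ∈ Finset.range n) =>
          MeasurableSpace.comap (X i) inferInstance) i (Finset.mem_range.2 h)
      exact measurable_iff_comap_le.2 hle
    · simp only [hψdef, if_neg h]
      exact measurable_const
  have hψcomap : MeasurableSpace.comap ψ inferInstance = natSigma X n := by
    refine le_antisymm (measurable_iff_comap_le.1 hψm) (iSup₂_le fun i hi => ?_)
    have hXi : X i = (fun v : ℕ → ℝ => v i) ∘ ψ := by
      funext ω
      simp [hψdef, Finset.mem_range.1 hi]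
    rw [hXi, ← MeasurableSpace.comap_comp]
    exact MeasurableSpace.comap_mono (measurable_iff_comap_le.1 (measurable_pi_apply i))
  -- f
  set f : Ω → ℝ := fun ω' =>
    Wproc (fun i => X i ω') z (n + 1) - Wproc (fun i => X i ω') z n with hfdef
  have hXfun : Measurable fun ω => (fun i => X i ω) := measurable_pi_lambda _ hmeas
  have hfmeas : Measurable f :=
    ((measurable_Wproc z (n+1)).comp hXfun).sub ((measurable_Wproc z n).comp hXfun)
  have hfG : ∀ ω, f ω = Wproc (Function.update (ψ ω) n (X n ω)) z (n+1) - Wproc (ψ ω) z n := by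
    intro ω
    have e1 : Wproc (fun i => X i ω) z (n+1) =
        Wproc (Function.update (ψ ω) n (X n ω)) z (n+1) := by
      apply Wproc_congr
      intro i hi
      by_cases h : i = n
      · subst h; rw [Function.update_self]
      · have hilt : i < n := by omega
        rw [Function.update_of_ne h]
        simp [hψdef, hilt]
    have e2 : Wproc (fun i => X i ω) z n = Wproc (ψ ω) z n := by
      apply Wproc_congr
      intro i hi
      simp [hψdef, hi]
    rw [hfdef]; dsimp only; rw [e1, e2]
  have hfbound : ∀ ω, |f ω| ≤ 2 * (1 - z)⁻¹ := by
    intro ω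
    rw [hfG ω]
    exact G_bound hz1 n (ψ ω, X n ω)
  have hfint : Integrable f μ := by
    refine Integrable.mono' (integrable_const (2 * (1 - z)⁻¹)) hfmeas.aestronglyMeasurable
      (Filter.Eventually.of_forall fun ω => ?_)
    rw [Real.norm_eq_abs]; exact hfbound ω
  -- candidate
  set φv : (ℕ → ℝ) → ℝ := fun v => -Real.log (1 - z) - (if mK v n < z then 1 else 0)
    with hφvdef
  have hφvmeas : Measurable φv :=
    measurable_const.sub
      (Measurable.ite (measurableSet_lt (measurable_mK n) measurable_const)
        measurable_const measurable_const)
  set φ : Ω → ℝ := fun ω => φv (ψ ω) with hφdef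
  have hφm : Measurable[natSigma X n] φ := hφvmeas.comp hψm
  have hφmeas : Measurable φ := hφvmeas.comp hψmeas
  have hφvbound : ∀ v, |φv v| ≤ |Real.log (1 - z)| + 1 := by
    intro v
    rw [hφvdef]
    dsimp only
    have h1 := le_abs_self (Real.log (1 - z))
    have h2 := neg_abs_le (Real.log (1 - z))
    split_ifs with h <;> (rw [abs_le]; constructor <;> linarith)
  have hφint : Integrable φ μ := by
    refine Integrable.mono' (integrable_const (|Real.log (1 - z)| + 1))
      hφmeas.aestronglyMeasurable (Filter.Eventually.of_forall fun ω => ?_)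
    rw [Real.norm_eq_abs]; exact hφvbound (ψ ω)
  -- measures
  set ν : Measure ℝ := volume.restrict (Set.Icc (0:ℝ) 1) with hνdef
  haveI hν : IsProbabilityMeasure ν := ⟨by simp [hνdef, Real.volume_Icc]⟩
  set κ : Measure (ℕ → ℝ) := Measure.map ψ μ with hκdef
  haveI hκP : IsProbabilityMeasure κ := Measure.isProbabilityMeasure_map hψmeas.aemeasurable
  -- pair law
  have hpairlaw : Measure.map (fun ω => (ψ ω, X n ω)) μ = κ.prod ν := by
    have hdisj : Disjoint (Finset.range n) ({n} : Finset ℕ) := by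
      simp [Finset.disjoint_singleton_right]
    have h2 := hindep.indepFun_finset (Finset.range n) {n} hdisj hmeas
    set F : ((i : (Finset.range n : Finset ℕ)) → ℝ) → ℕ → ℝ :=
      fun g i => if h : i < n then g ⟨i, Finset.mem_range.2 h⟩ else 0 with hFdef
    have hF : Measurable F := by
      apply measurable_pi_lambda
      intro i
      by_cases h : i < n
      · simp only [hFdef, dif_pos h]
        exact measurable_pi_apply _
      · simp only [hFdef, dif_neg h]
        exact measurable_const
    have hE : Measurable fun g : ((i : ({n} : Finset ℕ)) → ℝ) =>
        g ⟨n, Finset.mem_singleton_self n⟩ := measurable_pi_apply _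
    have h3 := h2.comp hF hE
    have hψeq : ψ = F ∘ (fun ω (i : (Finset.range n : Finset ℕ)) => X i ω) := by
      funext ω
      funext i
      by_cases h : i < n <;> simp [hψdef, hFdef, h]
    have hXeq : X n = (fun g : ((i : ({n} : Finset ℕ)) → ℝ) =>
        g ⟨n, Finset.mem_singleton_self n⟩) ∘ (fun ω (i : ({n} : Finset ℕ)) => X i ω) := rfl
    have hIF : IndepFun ψ (X n) μ := by
      rw [hψeq, hXeq]; exact h3
    have := (indepFun_iff_map_prod_eq_prod_map_map hψmeas.aemeasurable
      (hmeas n).aemeasurable).1 hIF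
    rw [this, hunif n]
  -- Good set
  set Good : Set (ℕ → ℝ) := {v | ∀ i, i < n → v i ∈ Set.Ico (0:ℝ) 1} with hGooddef
  have hGoodMeas : MeasurableSet Good := by
    have : Good = ⋂ (i : ℕ), {v : ℕ → ℝ | i < n → v i ∈ Set.Ico (0:ℝ) 1} := by
      ext v; simp [hGooddef]
    rw [this]
    refine MeasurableSet.iInter fun i => ?_
    by_cases h : i < n
    · have : {v : ℕ → ℝ | i < n → v i ∈ Set.Ico (0:ℝ) 1} =
          (fun v : ℕ → ℝ => v i) ⁻¹' Set.Ico (0:ℝ) 1 := by ext v; simp [h]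
      rw [this]
      exact measurable_pi_apply i measurableSet_Ico
    · have : {v : ℕ → ℝ | i < n → v i ∈ Set.Ico (0:ℝ) 1} = Set.univ := by ext v; simp [h]
      rw [this]; exact MeasurableSet.univ
  have hXae : ∀ i, ∀ᵐ ω ∂μ, X i ω ∈ Set.Ico (0:ℝ) 1 := by
    intro i
    have hp : μ (X i ⁻¹' Set.Ico (0:ℝ) 1) = 1 := by
      rw [← Measure.map_apply (hmeas i) measurableSet_Ico, hunif i,
        Measure.restrict_apply measurableSet_Ico,
        Set.inter_eq_left.2 Set.Ico_subset_Icc_self, Real.volume_Ico]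
      norm_num
    rw [ae_iff]
    have hc : {ω | ¬ X i ω ∈ Set.Ico (0:ℝ) 1} = (X i ⁻¹' Set.Ico (0:ℝ) 1)ᶜ := rfl
    rw [hc, measure_compl (hmeas i measurableSet_Ico) (measure_ne_top μ _), hp, measure_univ]
    simp
  have hGoodae : ∀ᵐ v ∂κ, v ∈ Good := by
    rw [hκdef]
    refine (MeasureTheory.ae_map_iff hψmeas.aemeasurable hGoodMeas).2 ?_
    have hall : ∀ᵐ ω ∂μ, ∀ i : ℕ, i < n → X i ω ∈ Set.Ico (0:ℝ) 1 :=
      ae_all_iff.2 fun i => by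
        by_cases h : i < n
        · filter_upwards [hXae i] with ω hω _
          exact hω
        · filter_upwards with ω hi
          exact absurd hi h
    filter_upwards [hall] with ω hω
    show ∀ i, i < n → ψ ω i ∈ Set.Ico (0:ℝ) 1
    intro i hi
    simpa [hψdef, hi] using hω i hi
  -- set integral equality
  have hsetint : ∀ s, MeasurableSet[natSigma X n] s →
      ∫ ω in s, f ω ∂μ = ∫ ω in s, φ ω ∂μ := by
    intro s hs
    rw [← hψcomap] at hs
    obtain ⟨B, hB, hBs⟩ := hs
    subst hBs
    set G : (ℕ → ℝ) × ℝ → ℝ := fun p =>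
      Wproc (Function.update p.1 n p.2) z (n+1) - Wproc p.1 z n with hGdef
    have hGmeas : Measurable G := measurable_G z n
    set H : (ℕ → ℝ) × ℝ → ℝ := fun p =>
      Set.indicator B (fun _ => (1:ℝ)) p.1 * G p with hHdef
    have hHmeas : Measurable H :=
      ((measurable_one.indicator hB).comp measurable_fst).mul hGmeas
    have hHbound : ∀ p, ‖H p‖ ≤ 2 * (1 - z)⁻¹ := by
      intro p
      rw [Real.norm_eq_abs, hHdef]
      dsimp only
      rw [abs_mul]
      have h1 : |Set.indicator B (fun _ => (1:ℝ)) p.1| ≤ 1 := by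
        by_cases h : p.1 ∈ B <;> simp [h]
      have h2 : |G p| ≤ 2 * (1 - z)⁻¹ := G_bound hz1 n p
      have h3 : (0:ℝ) ≤ |G p| := abs_nonneg _
      nlinarith
    have hHint : Integrable H (κ.prod ν) :=
      Integrable.mono' (integrable_const (2 * (1 - z)⁻¹)) hHmeas.aestronglyMeasurable
        (Filter.Eventually.of_forall hHbound)
    have hfs : ∀ ω, Set.indicator (ψ ⁻¹' B) f ω = H (ψ ω, X n ω) := by
      intro ω
      by_cases hωB : ψ ω ∈ B <;>
        simp [hHdef, hGdef, Set.indicator_apply, Set.mem_preimage, hωB, hfG ω]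
    calc ∫ ω in ψ ⁻¹' B, f ω ∂μ = ∫ ω, H (ψ ω, X n ω) ∂μ := by
          rw [← integral_indicator (hψmeas hB)]
          exact integral_congr_ae (Filter.Eventually.of_forall hfs)
      _ = ∫ p, H p ∂(Measure.map (fun ω => (ψ ω, X n ω)) μ) :=
          (integral_map (hψmeas.prodMk (hmeas n)).aemeasurable
            hHmeas.aestronglyMeasurable).symm
      _ = ∫ p, H p ∂(κ.prod ν) := by rw [hpairlaw]
      _ = ∫ v, ∫ x, H (v, x) ∂ν ∂κ := integral_prod _ hHint
      _ = ∫ v, Set.indicator B (fun _ => (1:ℝ)) v * φv v ∂κ := by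
          apply integral_congr_ae
          filter_upwards [hGoodae] with v hv
          simp only [hHdef, hGdef]
          rw [MeasureTheory.integral_const_mul, inner_integral hz0 hz1 n v hv, hφvdef]
      _ = ∫ v in B, φv v ∂κ := by
          rw [← integral_indicator hB]
          apply integral_congr_ae
          filter_upwards with v
          by_cases h : v ∈ B <;> simp [h]
      _ = ∫ ω in ψ ⁻¹' B, φ ω ∂μ := by
          rw [hκdef, setIntegral_map hB hφvmeas.aestronglyMeasurable hψmeas.aemeasurable]
  -- condexp
  haveI hfin : IsFiniteMeasure (μ.trim hm) := by
    constructor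
    rw [MeasureTheory.trim_measurableSet_eq hm MeasurableSet.univ]
    exact measure_lt_top μ _
  have hcond : φ =ᵐ[μ] μ[f | natSigma X n] :=
    ae_eq_condExp_of_forall_setIntegral_eq hm hfint
      (fun s _ _ => hφint.integrableOn)
      (fun s hs _ => (hsetint s hs).symm)
      ⟨φ, hφm.stronglyMeasurable, Filter.EventuallyEq.rfl⟩
  filter_upwards [hcond] with ω hω hW
  rw [← hω]
  have hkey : mK (ψ ω) n < z := by
    have hne : ((forgetMem {0} (fun i => X i ω) n).filter (· < z)).Nonempty := by
      by_contra h
      apply hW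
      rw [Wproc, Finset.not_nonempty_iff_eq_empty.1 h, Finset.sum_empty]
    obtain ⟨y, hy⟩ := hne
    rw [Finset.mem_filter] at hy
    have hMeq : forgetMem {0} (fun i => X i ω) n = forgetMem {0} (ψ ω) n :=
      forgetMem_congr n (fun i hi => by simp [hψdef, hi])
    exact lt_of_le_of_lt (Finset.min'_le _ y (hMeq ▸ hy.1)) hy.2
  rw [hφdef]
  dsimp only
  rw [hφvdef]
  dsimp only
  rw [if_pos hkey]
end

section
/- The process X(z₀, n) = W(z₀,n) − Z(z₀,n) is a martingale with respect to the natural filtration of the forgetting process, where z₀ = 1 − 1/e. -/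
open MeasureTheory ProbabilityTheory Finset

section Part1
open Finset

namespace ForgetAux

lemma one_sub_critPoint : 1 - critPoint = (Real.exp 1)⁻¹ := by
  simp [critPoint]

lemma critPoint_lt_one : critPoint < 1 := by
  have : (0:ℝ) < (Real.exp 1)⁻¹ := by positivity
  simp only [critPoint]; linarith

lemma critPoint_pos : 0 < critPoint := by
  have he : (1:ℝ) < Real.exp 1 := by have := Real.exp_one_gt_d9; norm_num at this; linarith
  have h1 : (Real.exp 1)⁻¹ < 1 := by
    rw [inv_lt_one_iff₀]; right; exact he
  simp only [critPoint]; linarith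

lemma term_pos {x : ℝ} (hx : x < critPoint) : 0 < 1 / (1 - x) := by
  have h : 0 < 1 - x := by have := critPoint_lt_one; linarith
  exact div_pos one_pos h

lemma term_le {x : ℝ} (hx : x < critPoint) : 1 / (1 - x) ≤ Real.exp 1 := by
  have h1 : (0:ℝ) < (Real.exp 1)⁻¹ := by positivity
  have h2 : (Real.exp 1)⁻¹ ≤ 1 - x := by
    rw [← one_sub_critPoint]; linarith
  calc 1 / (1 - x) ≤ 1 / (Real.exp 1)⁻¹ := by
        apply one_div_le_one_div_of_le h1 h2
    _ = Real.exp 1 := by simp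

lemma mem_forgetStep (S : Finset ℝ) (x : ℝ) : x ∈ forgetStep S x := by
  unfold forgetStep
  split_ifs <;> simp

lemma forgetMem_nonempty (xs : ℕ → ℝ) (n : ℕ) : (forgetMem {0} xs n).Nonempty := by
  cases n with
  | zero => exact ⟨0, by simp [forgetMem]⟩
  | succ m => exact ⟨xs m, mem_forgetStep _ _⟩

lemma forgetStep_subset (S : Finset ℝ) (x : ℝ) : forgetStep S x ⊆ insert x S := by
  unfold forgetStep
  split_ifs with h1 h2
  · exact insert_subset_insert _ (erase_subset _ _)
  · exact subset_rfl
  · exact subset_rfl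

lemma forgetMem_subset (xs : ℕ → ℝ) (n : ℕ) :
    forgetMem {0} xs n ⊆ insert 0 ((Finset.range n).image xs) := by
  induction n with
  | zero => simp [forgetMem]
  | succ m ih =>
      refine (forgetStep_subset _ _).trans ?_
      intro y hy
      rcases Finset.mem_insert.1 hy with rfl | hy
      · exact Finset.mem_insert_of_mem (Finset.mem_image.2 ⟨m, by simp, rfl⟩)
      · rcases Finset.mem_insert.1 (ih hy) with rfl | hy'
        · exact Finset.mem_insert_self _ _
        · rcases Finset.mem_image.1 hy' with ⟨i, hi, rfl⟩
          exact Finset.mem_insert_of_mem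
            (Finset.mem_image.2 ⟨i, Finset.mem_range.2 ((Finset.mem_range.1 hi).trans (Nat.lt_succ_self m)), rfl⟩)

lemma forgetMem_card (xs : ℕ → ℝ) (n : ℕ) : (forgetMem {0} xs n).card ≤ n + 1 := by
  induction n with
  | zero => simp [forgetMem]
  | succ m ih =>
      calc (forgetMem {0} xs (m+1)).card ≤ (insert (xs m) (forgetMem {0} xs m)).card :=
            Finset.card_le_card (forgetStep_subset _ _)
        _ ≤ (forgetMem {0} xs m).card + 1 := Finset.card_insert_le _ _
        _ ≤ m + 1 + 1 := by omega

lemma Wproc_nonneg (xs : ℕ → ℝ) (n : ℕ) : 0 ≤ Wproc xs critPoint n := by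
  refine Finset.sum_nonneg fun x hx => ?_
  exact (term_pos (Finset.mem_filter.1 hx).2).le

lemma Wproc_le (xs : ℕ → ℝ) (n : ℕ) : Wproc xs critPoint n ≤ (n + 1) * Real.exp 1 := by
  unfold Wproc
  calc ∑ x ∈ (forgetMem {0} xs n).filter (· < critPoint), 1 / (1 - x)
      ≤ ∑ _x ∈ (forgetMem {0} xs n).filter (· < critPoint), Real.exp 1 :=
        Finset.sum_le_sum fun x hx => term_le (Finset.mem_filter.1 hx).2
    _ = ((forgetMem {0} xs n).filter (· < critPoint)).card * Real.exp 1 := by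
        rw [Finset.sum_const, nsmul_eq_mul]
    _ ≤ (n + 1) * Real.exp 1 := by
        have h1 : ((forgetMem {0} xs n).filter (· < critPoint)).card ≤ n + 1 :=
          (Finset.card_le_card (Finset.filter_subset _ _)).trans (forgetMem_card xs n)
        have := Real.exp_pos 1
        have h2 : (((forgetMem {0} xs n).filter (· < critPoint)).card : ℝ) ≤ (n:ℝ) + 1 := by
          exact_mod_cast h1
        nlinarith

lemma Wproc_ne_zero_iff (xs : ℕ → ℝ) (n : ℕ) :
    Wproc xs critPoint n ≠ 0 ↔ ∃ y ∈ forgetMem {0} xs n, y < critPoint := by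
  constructor
  · intro h
    by_contra hc
    push_neg at hc
    have : (forgetMem {0} xs n).filter (· < critPoint) = ∅ := by
      refine Finset.filter_eq_empty_iff.2 fun {y} hy => ?_
      exact fun hlt => absurd hlt (not_lt.2 (hc y hy))
    exact h (by simp [Wproc, this])
  · rintro ⟨y, hy, hlt⟩
    have hpos : 0 < Wproc xs critPoint n := by
      refine Finset.sum_pos (fun x hx => term_pos (Finset.mem_filter.1 hx).2) ?_
      exact ⟨y, Finset.mem_filter.2 ⟨hy, hlt⟩⟩
    exact hpos.ne'

lemma min'_lt_of_Wne (xs : ℕ → ℝ) (n : ℕ) (h : Wproc xs critPoint n ≠ 0) :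
    (forgetMem {0} xs n).min' (forgetMem_nonempty xs n) < critPoint := by
  obtain ⟨y, hy, hlt⟩ := (Wproc_ne_zero_iff xs n).1 h
  exact lt_of_le_of_lt (Finset.min'_le _ _ hy) hlt

lemma Zproc_succ (xs : ℕ → ℝ) (z : ℝ) (n : ℕ) :
    Zproc xs z (n + 1) = Zproc xs z n +
      if Wproc xs z n = 0 then Wproc xs z (n + 1) else 0 :=
  Finset.sum_range_succ _ _

lemma Xproc_succ_of_zero (xs : ℕ → ℝ) (z : ℝ) (n : ℕ) (h : Wproc xs z n = 0) :
    Xproc xs z (n + 1) = Xproc xs z n := by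
  simp [Xproc, Zproc_succ, h]
  try ring

lemma Xproc_succ_of_ne (xs : ℕ → ℝ) (z : ℝ) (n : ℕ) (h : Wproc xs z n ≠ 0) :
    Xproc xs z (n + 1) = Xproc xs z n + (Wproc xs z (n+1) - Wproc xs z n) := by
  simp [Xproc, Zproc_succ, h]
  try ring

lemma forgetMem_congr {T : Finset ℝ} {xs ys : ℕ → ℝ} {n : ℕ} (h : ∀ i < n, xs i = ys i) :
    forgetMem T xs n = forgetMem T ys n := by
  induction n with
  | zero => rfl
  | succ m ih =>
      show forgetStep (forgetMem T xs m) (xs m) = forgetStep (forgetMem T ys m) (ys m)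
      rw [ih (fun i hi => h i (hi.trans (Nat.lt_succ_self m))), h m (Nat.lt_succ_self m)]

lemma Wproc_congr {xs ys : ℕ → ℝ} {z : ℝ} {n : ℕ} (h : ∀ i < n, xs i = ys i) :
    Wproc xs z n = Wproc ys z n := by
  unfold Wproc; rw [forgetMem_congr h]

lemma Zproc_congr {xs ys : ℕ → ℝ} {z : ℝ} {n : ℕ} (h : ∀ i < n, xs i = ys i) :
    Zproc xs z n = Zproc ys z n := by
  unfold Zproc
  refine Finset.sum_congr rfl fun k hk => ?_
  have hk' := Finset.mem_range.1 hk
  rw [Wproc_congr (fun i hi => h i (by omega)),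
    Wproc_congr (z := z) (n := k+1) (fun i hi => h i (by omega))]

lemma Xproc_congr {xs ys : ℕ → ℝ} {z : ℝ} {n : ℕ} (h : ∀ i < n, xs i = ys i) :
    Xproc xs z n = Xproc ys z n := by
  unfold Xproc; rw [Wproc_congr h, Zproc_congr h]

/-- the key one-step formula for `W` -/
lemma Wproc_step (xs : ℕ → ℝ) (n : ℕ) (hW : Wproc xs critPoint n ≠ 0)
    (hy : xs n ∉ forgetMem {0} xs n) :
    Wproc xs critPoint (n + 1) = Wproc xs critPoint n
      + (if xs n < critPoint then 1 / (1 - xs n) else 0)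
      - (if (forgetMem {0} xs n).min' (forgetMem_nonempty xs n) < xs n
          then 1 / (1 - (forgetMem {0} xs n).min' (forgetMem_nonempty xs n)) else 0) := by
  classical
  set S := forgetMem {0} xs n with hS
  have hne : S.Nonempty := forgetMem_nonempty xs n
  set m := S.min' hne with hm
  have hmS : m ∈ S := S.min'_mem hne
  have hmz : m < critPoint := min'_lt_of_Wne xs n hW
  have hstep : forgetMem {0} xs (n+1) = forgetStep S (xs n) := rfl
  have hfilter_erase : (S.erase m).filter (· < critPoint) =
      (S.filter (· < critPoint)).erase m := Finset.filter_erase _ _ _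
  have hmfilter : m ∈ S.filter (· < critPoint) := Finset.mem_filter.2 ⟨hmS, hmz⟩
  by_cases hlt : m < xs n
  · -- min removed
    have hform : forgetStep S (xs n) = insert (xs n) (S.erase m) := by
      unfold forgetStep
      rw [dif_pos hne, if_pos (by rw [← hm]; exact hlt)]
    have hxnot : xs n ∉ S.erase m := fun hc => hy (Finset.mem_of_mem_erase hc)
    have herase_sum : ∑ x ∈ (S.erase m).filter (· < critPoint), 1 / (1 - x)
        = Wproc xs critPoint n - 1 / (1 - m) := by
      rw [hfilter_erase]
      have := Finset.add_sum_erase (S.filter (· < critPoint)) (fun x => 1 / (1 - x)) hmfilter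
      unfold Wproc
      rw [← hS]
      linarith [this]
    rw [Wproc]
    show (∑ x ∈ (forgetMem {0} xs (n+1)).filter (· < critPoint), 1 / (1-x)) = _
    rw [hstep, hform, Finset.filter_insert]
    by_cases hxz : xs n < critPoint
    · rw [if_pos hxz, Finset.sum_insert (fun hc => hxnot (Finset.mem_of_mem_filter _ hc)),
        herase_sum, if_pos hxz, if_pos hlt]
      ring
    · rw [if_neg hxz, herase_sum, if_neg hxz, if_pos hlt]
      ring
  · -- new point below min
    have hform : forgetStep S (xs n) = insert (xs n) S := by
      unfold forgetStep
      rw [dif_pos hne, if_neg (by rw [← hm]; exact hlt)]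
    rw [Wproc]
    show (∑ x ∈ (forgetMem {0} xs (n+1)).filter (· < critPoint), 1 / (1-x)) = _
    rw [hstep, hform, Finset.filter_insert]
    have hxm : xs n < m := by
      rcases lt_or_eq_of_le (not_lt.1 hlt) with h | h
      · exact h
      · exact absurd (h ▸ hmS) hy
    have hxz : xs n < critPoint := hxm.trans hmz
    rw [if_pos hxz, Finset.sum_insert (fun hc => hy (Finset.mem_of_mem_filter _ hc))]
    rw [if_pos hxz, if_neg hlt]
    unfold Wproc
    rw [← hS]
    ring

end ForgetAux
end Part1
section Part2
open Finset

namespace ForgetAux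

/-- value of index `j`: index `0` is the initial point `0`, index `i+1` is input `xs i`. -/
def vl (xs : ℕ → ℝ) : ℕ → ℝ := fun j => if j = 0 then 0 else xs (j - 1)

open scoped Classical in
/-- index-level version of the forgetting process -/
noncomputable def Kproc (xs : ℕ → ℝ) : ℕ → Finset ℕ
  | 0 => {0}
  | m + 1 =>
    let A := Kproc xs m
    if A.Nonempty then
      if ∃ i ∈ A, vl xs i < xs m then
        let A' := A.filter fun j => ∃ i ∈ A, vl xs i < vl xs j
        if ∃ j ∈ A', vl xs j = xs m then A' else insert (m + 1) A'
      else if ∃ j ∈ A, vl xs j = xs m then A else insert (m + 1) A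
    else {m + 1}

lemma Kproc_zero (xs : ℕ → ℝ) : Kproc xs 0 = {0} := by rw [Kproc]

lemma vl_succ (xs : ℕ → ℝ) (m : ℕ) : vl xs (m + 1) = xs m := by simp [vl]

lemma Kproc_spec (xs : ℕ → ℝ) : ∀ m : ℕ,
    forgetMem {0} xs m = (Kproc xs m).image (vl xs)
      ∧ Set.InjOn (vl xs) (Kproc xs m)
      ∧ (∀ j ∈ Kproc xs m, j ≤ m) ∧ (Kproc xs m).Nonempty := by
  classical
  intro m
  induction m with
  | zero =>
      refine ⟨by simp [forgetMem, Kproc_zero, vl], ?_, by simp [Kproc_zero], by simp [Kproc_zero]⟩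
      intro a ha b hb _; simp [Kproc_zero] at ha hb; omega
  | succ m ih =>
      obtain ⟨him, hinj, hbd, hne⟩ := ih
      set f := vl xs with hf
      set A := Kproc xs m with hA
      set x := xs m with hx
      have hSne : (A.image f).Nonempty := hne.image f
      set S := A.image f with hS
      have hmemstep : forgetMem {0} xs (m+1) = forgetStep S x := by
        show forgetStep (forgetMem {0} xs m) (xs m) = _
        rw [him]
      set c := S.min' hSne with hc
      have hcmem : c ∈ S := S.min'_mem hSne
      have hC1 : (∃ i ∈ A, f i < x) ↔ c < x := by
        constructor
        · rintro ⟨i, hi, hlt⟩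
          exact lt_of_le_of_lt (S.min'_le _ (Finset.mem_image_of_mem f hi)) hlt
        · intro hlt
          obtain ⟨i, hi, hfi⟩ := Finset.mem_image.1 hcmem
          exact ⟨i, hi, hfi.symm ▸ hlt⟩
      have hm1A : (m + 1) ∉ A := fun hc' => by have := hbd _ hc'; omega
      have hfm1 : f (m + 1) = x := vl_succ xs m
      -- the filtered set
      set A' := A.filter (fun j => ∃ i ∈ A, f i < f j) with hA'
      have himA' : A'.image f = S.erase c := by
        have h1 : A'.image f = S.filter (fun y => ∃ i ∈ A, f i < y) := by
          rw [hS, Finset.filter_image]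
        rw [h1]
        rw [← Finset.filter_ne' S c]
        refine Finset.filter_congr ?_
        intro y hy
        constructor
        · rintro ⟨i, hi, hlt⟩
          have : c ≤ f i := S.min'_le _ (Finset.mem_image_of_mem f hi)
          intro hyc; rw [hyc] at hlt; linarith
        · intro hyc
          obtain ⟨i, hi, hfi⟩ := Finset.mem_image.1 hcmem
          refine ⟨i, hi, ?_⟩
          rw [hfi]
          exact lt_of_le_of_ne (S.min'_le _ hy) (Ne.symm hyc)
      have hA'sub : A' ⊆ A := Finset.filter_subset _ _
      have hinj' : Set.InjOn f A' := hinj.mono (by exact_mod_cast hA'sub)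
      have hbd' : ∀ j ∈ A', j ≤ m := fun j hj => hbd j (hA'sub hj)
      by_cases h1 : ∃ i ∈ A, f i < x
      · have hcx : c < x := hC1.1 h1
        have hform : forgetStep S x = insert x (S.erase c) := by
          unfold forgetStep
          rw [dif_pos hSne, if_pos hcx]
        by_cases h2 : ∃ j ∈ A', f j = x
        · -- value already present, K' = A'
          have hK : Kproc xs (m+1) = A' := by
            rw [Kproc]
            simp only [← hA, ← hf, ← hx]
            rw [if_pos hne, if_pos h1, if_pos h2]
          obtain ⟨j0, hj0, hfj0⟩ := h2
          have hxin : x ∈ S.erase c := by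
            rw [← himA']; exact hfj0 ▸ Finset.mem_image_of_mem f hj0
          refine ⟨?_, ?_, ?_, ⟨j0, hK ▸ hj0⟩⟩
          · rw [hmemstep, hform, Finset.insert_eq_self.2 hxin, hK, himA']
          · rw [hK]; exact hinj'
          · rw [hK]; exact fun j hj => (hbd' j hj).trans (Nat.le_succ m)
        · -- new index inserted
          have hK : Kproc xs (m+1) = insert (m+1) A' := by
            rw [Kproc]
            simp only [← hA, ← hf, ← hx]
            rw [if_pos hne, if_pos h1, if_neg h2]
          have hm1A' : (m+1) ∉ A' := fun hc' => hm1A (hA'sub hc')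
          have hxnotin : x ∉ A'.image f := by
            intro hc'
            obtain ⟨j, hj, hfj⟩ := Finset.mem_image.1 hc'
            exact h2 ⟨j, hj, hfj⟩
          refine ⟨?_, ?_, ?_, ⟨m+1, hK ▸ Finset.mem_insert_self _ _⟩⟩
          · rw [hmemstep, hform, hK, Finset.image_insert, hfm1, himA']
          · rw [hK]
            rw [Finset.coe_insert]
            rw [Set.injOn_insert (by exact_mod_cast hm1A')]
            refine ⟨hinj', ?_⟩
            rw [hfm1]
            intro hc'
            rw [← Finset.coe_image] at hc'
            exact hxnotin (by exact_mod_cast hc')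
          · rw [hK]
            intro j hj
            rcases Finset.mem_insert.1 hj with rfl | hj'
            · exact le_rfl
            · exact (hbd' j hj').trans (Nat.le_succ m)
      · have hcx : ¬ c < x := fun hc' => h1 (hC1.2 hc')
        have hform : forgetStep S x = insert x S := by
          unfold forgetStep
          rw [dif_pos hSne, if_neg hcx]
        by_cases h2 : ∃ j ∈ A, f j = x
        · have hK : Kproc xs (m+1) = A := by
            rw [Kproc]
            simp only [← hA, ← hf, ← hx]
            rw [if_pos hne, if_neg h1, if_pos h2]
          obtain ⟨j0, hj0, hfj0⟩ := h2
          have hxin : x ∈ S := hfj0 ▸ Finset.mem_image_of_mem f hj0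
          refine ⟨?_, ?_, ?_, hK ▸ hne⟩
          · rw [hmemstep, hform, Finset.insert_eq_self.2 hxin, hK, hS]
          · rw [hK]; exact hinj
          · rw [hK]; exact fun j hj => (hbd j hj).trans (Nat.le_succ m)
        · have hK : Kproc xs (m+1) = insert (m+1) A := by
            rw [Kproc]
            simp only [← hA, ← hf, ← hx]
            rw [if_pos hne, if_neg h1, if_neg h2]
          have hxnotin : x ∉ A.image f := by
            intro hc'
            obtain ⟨j, hj, hfj⟩ := Finset.mem_image.1 hc'
            exact h2 ⟨j, hj, hfj⟩
          refine ⟨?_, ?_, ?_, ⟨m+1, hK ▸ Finset.mem_insert_self _ _⟩⟩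
          · rw [hmemstep, hform, hK, Finset.image_insert, hfm1, hS]
          · rw [hK, Finset.coe_insert, Set.injOn_insert (by exact_mod_cast hm1A)]
            refine ⟨hinj, ?_⟩
            rw [hfm1]
            intro hc'
            rw [← Finset.coe_image] at hc'
            exact hxnotin (by exact_mod_cast hc')
          · rw [hK]
            intro j hj
            rcases Finset.mem_insert.1 hj with rfl | hj'
            · exact le_rfl
            · exact (hbd j hj').trans (Nat.le_succ m)

lemma Wproc_eq_sum_Kproc (xs : ℕ → ℝ) (z : ℝ) (n : ℕ) :
    Wproc xs z n = ∑ j ∈ (Kproc xs n).filter (fun j => vl xs j < z), 1 / (1 - vl xs j) := by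
  classical
  obtain ⟨him, hinj, -, -⟩ := Kproc_spec xs n
  unfold Wproc
  rw [him, Finset.filter_image, Finset.sum_image]
  intro a ha b hb hab
  exact hinj (by exact_mod_cast (Finset.filter_subset _ _ ha))
    (by exact_mod_cast (Finset.filter_subset _ _ hb)) hab

end ForgetAux
end Part2
section Part3
open Finset MeasureTheory

namespace ForgetAux

instance : MeasurableSpace (Finset ℕ) := ⊤
instance : MeasurableSingletonClass (Finset ℕ) := ⟨fun _ => trivial⟩

lemma measurable_vl (j : ℕ) : Measurable fun xs : ℕ → ℝ => vl xs j := by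
  unfold vl
  by_cases h : j = 0
  · simp only [h, if_pos rfl]; exact measurable_const
  · simp only [if_neg h]; exact measurable_pi_apply _

lemma measurable_finset_filter {p : (ℕ → ℝ) → ℕ → Prop} [∀ xs j, Decidable (p xs j)] (A : Finset ℕ)
    (hp : ∀ j, MeasurableSet {xs : ℕ → ℝ | p xs j}) :
    Measurable fun xs => A.filter (fun j => p xs j) := by
  apply measurable_to_countable'
  intro B
  by_cases hBA : B ⊆ A
  · have : (fun xs => A.filter (fun j => p xs j)) ⁻¹' {B}
        = ⋂ j ∈ (A : Set ℕ), {xs : ℕ → ℝ | p xs j ↔ j ∈ B} := by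
      ext xs
      simp only [Set.mem_preimage, Set.mem_singleton_iff, Set.mem_iInter, Set.mem_setOf_eq,
        Finset.mem_coe]
      constructor
      · intro h j hj
        constructor
        · intro hpj
          rw [← h]; exact Finset.mem_filter.2 ⟨hj, hpj⟩
        · intro hjB
          rw [← h] at hjB; exact (Finset.mem_filter.1 hjB).2
      · intro h
        ext j
        simp only [Finset.mem_filter]
        constructor
        · rintro ⟨hjA, hpj⟩; exact (h j hjA).1 hpj
        · intro hjB
          have hjA : j ∈ A := hBA hjB
          exact ⟨hjA, (h j hjA).2 hjB⟩
    rw [this]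
    refine MeasurableSet.biInter (Set.to_countable _) fun j _ => ?_
    by_cases hjB : j ∈ B
    · have h2 : {xs : ℕ → ℝ | p xs j ↔ j ∈ B} = {xs | p xs j} := by
        ext xs; simp [hjB]
      rw [h2]; exact hp j
    · have h2 : {xs : ℕ → ℝ | p xs j ↔ j ∈ B} = {xs | p xs j}ᶜ := by
        ext xs; simp [hjB]
      rw [h2]; exact (hp j).compl
  · have : (fun xs => A.filter (fun j => p xs j)) ⁻¹' {B} = ∅ := by
      ext xs
      simp only [Set.mem_preimage, Set.mem_singleton_iff, Set.mem_empty_iff_false, iff_false]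
      intro h
      exact hBA (h ▸ Finset.filter_subset _ _)
    rw [this]; exact MeasurableSet.empty

end ForgetAux
end Part3

section Meas
open MeasureTheory
namespace ForgetAux

open scoped Classical in
noncomputable def stepK (m : ℕ) (A : Finset ℕ) (xs : ℕ → ℝ) : Finset ℕ :=
  if A.Nonempty then
    if ∃ i ∈ A, vl xs i < xs m then
      let A' := A.filter fun j => ∃ i ∈ A, vl xs i < vl xs j
      if ∃ j ∈ A', vl xs j = xs m then A' else insert (m + 1) A'
    else if ∃ j ∈ A, vl xs j = xs m then A else insert (m + 1) A
  else {m + 1}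

lemma Kproc_succ (xs : ℕ → ℝ) (m : ℕ) : Kproc xs (m+1) = stepK m (Kproc xs m) xs := by
  rw [Kproc]; rfl

lemma measurable_insert_finset (a : ℕ) : Measurable fun A : Finset ℕ => insert a A :=
  measurable_from_top

lemma measurable_stepK (m : ℕ) (A : Finset ℕ) : Measurable fun xs => stepK m A xs := by
  classical
  unfold stepK
  by_cases hA : A.Nonempty
  · simp only [if_pos hA]
    have h1 : MeasurableSet {xs : ℕ → ℝ | ∃ i ∈ A, vl xs i < xs m} := by
      have : {xs : ℕ → ℝ | ∃ i ∈ A, vl xs i < xs m}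
          = ⋃ i ∈ (A : Set ℕ), {xs | vl xs i < xs m} := by
        ext xs; simp
      rw [this]
      exact MeasurableSet.biUnion (Set.to_countable _) fun i _ =>
        measurableSet_lt (measurable_vl i) (measurable_pi_apply m)
    have hfiltmeas : Measurable fun xs : ℕ → ℝ =>
        A.filter fun j => ∃ i ∈ A, vl xs i < vl xs j := by
      apply measurable_finset_filter
      intro j
      have : {xs : ℕ → ℝ | ∃ i ∈ A, vl xs i < vl xs j}
          = ⋃ i ∈ (A : Set ℕ), {xs | vl xs i < vl xs j} := by
        ext xs; simp
      rw [this]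
      exact MeasurableSet.biUnion (Set.to_countable _) fun i _ =>
        measurableSet_lt (measurable_vl i) (measurable_vl j)
    have h2 : MeasurableSet {xs : ℕ → ℝ |
        ∃ j ∈ A.filter fun j => ∃ i ∈ A, vl xs i < vl xs j, vl xs j = xs m} := by
      have : {xs : ℕ → ℝ | ∃ j ∈ A.filter fun j => ∃ i ∈ A, vl xs i < vl xs j, vl xs j = xs m}
          = ⋃ j ∈ (A : Set ℕ),
              ((⋃ i ∈ (A : Set ℕ), {xs | vl xs i < vl xs j}) ∩ {xs | vl xs j = xs m}) := by
        ext xs; simp [Finset.mem_filter]; tauto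
      rw [this]
      refine MeasurableSet.biUnion (Set.to_countable _) fun j _ => ?_
      refine (MeasurableSet.biUnion (Set.to_countable _) fun i _ =>
        measurableSet_lt (measurable_vl i) (measurable_vl j)).inter ?_
      exact measurableSet_eq_fun (measurable_vl j) (measurable_pi_apply m)
    have h3 : MeasurableSet {xs : ℕ → ℝ | ∃ j ∈ A, vl xs j = xs m} := by
      have : {xs : ℕ → ℝ | ∃ j ∈ A, vl xs j = xs m}
          = ⋃ j ∈ (A : Set ℕ), {xs | vl xs j = xs m} := by
        ext xs; simp
      rw [this]
      exact MeasurableSet.biUnion (Set.to_countable _) fun j _ =>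
        measurableSet_eq_fun (measurable_vl j) (measurable_pi_apply m)
    refine Measurable.ite h1 ?_ ?_
    · refine Measurable.ite h2 hfiltmeas ?_
      exact (measurable_insert_finset (m+1)).comp hfiltmeas
    · exact Measurable.ite h3 measurable_const measurable_const
  · simp only [if_neg hA]; exact measurable_const

lemma measurable_Kproc (m : ℕ) : Measurable fun xs : ℕ → ℝ => Kproc xs m := by
  induction m with
  | zero => simp only [Kproc_zero]; exact measurable_const
  | succ m ih =>
      simp only [Kproc_succ]
      have : (fun xs : ℕ → ℝ => stepK m (Kproc xs m) xs)
          = (fun q : (ℕ → ℝ) × Finset ℕ => stepK m q.2 q.1) ∘ fun xs => (xs, Kproc xs m) := rfl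
      rw [this]
      exact (measurable_from_prod_countable_left fun A => measurable_stepK m A).comp
        (measurable_id.prodMk ih)

lemma measurable_Wproc (z : ℝ) (n : ℕ) : Measurable fun xs : ℕ → ℝ => Wproc xs z n := by
  classical
  have heq : (fun xs : ℕ → ℝ => Wproc xs z n)
      = (fun q : (ℕ → ℝ) × Finset ℕ =>
          ∑ j ∈ q.2, if vl q.1 j < z then 1 / (1 - vl q.1 j) else 0)
        ∘ fun xs => (xs, Kproc xs n) := by
    funext xs
    simp only [Function.comp_apply]
    rw [Wproc_eq_sum_Kproc, Finset.sum_filter]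
  rw [heq]
  refine Measurable.comp ?_ (measurable_id.prodMk (measurable_Kproc n))
  refine measurable_from_prod_countable_left fun A => ?_
  refine Finset.measurable_sum A fun j _ => ?_
  refine Measurable.ite (measurableSet_lt (measurable_vl j) measurable_const) ?_ measurable_const
  exact measurable_const.div (measurable_const.sub (measurable_vl j))

lemma measurable_Zproc (z : ℝ) (n : ℕ) : Measurable fun xs : ℕ → ℝ => Zproc xs z n := by
  classical
  unfold Zproc
  refine Finset.measurable_sum _ fun k _ => ?_
  refine Measurable.ite ?_ (measurable_Wproc z (k+1)) measurable_const
  exact measurableSet_eq_fun (measurable_Wproc z k) measurable_const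

lemma measurable_Xproc (z : ℝ) (n : ℕ) : Measurable fun xs : ℕ → ℝ => Xproc xs z n := by
  unfold Xproc
  exact (measurable_Wproc z n).sub (measurable_Zproc z n)

end ForgetAux
end Meas
section Part4
open Finset MeasureTheory intervalIntegral Set

namespace ForgetAux

lemma min'_congr {s t : Finset ℝ} (h : s = t) (hs : s.Nonempty) (ht : t.Nonempty) :
    s.min' hs = t.min' ht := by subst h; rfl

lemma intervalIntegrable_of_bdd {f : ℝ → ℝ} {C : ℝ} (hm : Measurable f)
    (hb : ∀ x, |f x| ≤ C) (a b : ℝ) : IntervalIntegrable f volume a b := by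
  rw [intervalIntegrable_iff]
  refine Measure.integrableOn_of_bounded (M := C) ?_ hm.aestronglyMeasurable ?_
  · rw [Set.uIoc]; exact measure_Ioc_lt_top.ne
  · exact ae_of_all _ fun x => by rw [Real.norm_eq_abs]; exact hb x

lemma integrableOn_Icc_of_bdd {f : ℝ → ℝ} {C : ℝ} (hm : Measurable f)
    (hb : ∀ x, |f x| ≤ C) : IntegrableOn f (Set.Icc (0:ℝ) 1) volume := by
  refine Measure.integrableOn_of_bounded (M := C) ?_ hm.aestronglyMeasurable ?_
  · exact measure_Icc_lt_top.ne
  · exact ae_of_all _ fun x => by rw [Real.norm_eq_abs]; exact hb x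

lemma g1_meas : Measurable fun y : ℝ => if y < critPoint then 1 / (1 - y) else 0 := by
  classical
  exact Measurable.ite (measurableSet_lt measurable_id measurable_const)
    (measurable_const.div (measurable_const.sub measurable_id)) measurable_const

lemma g1_bdd : ∀ y : ℝ, |if y < critPoint then 1 / (1 - y) else 0| ≤ Real.exp 1 := by
  intro y
  by_cases h : y < critPoint
  · rw [if_pos h, abs_of_pos (term_pos h)]; exact term_le h
  · rw [if_neg h, abs_zero]; exact (Real.exp_pos 1).le

lemma g2_meas (m c : ℝ) : Measurable fun y : ℝ => if m < y then c else 0 := by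
  classical
  exact Measurable.ite (measurableSet_lt measurable_const measurable_id)
    measurable_const measurable_const

lemma g2_bdd (m c : ℝ) : ∀ y : ℝ, |if m < y then c else 0| ≤ |c| := by
  intro y
  by_cases h : m < y
  · rw [if_pos h]
  · rw [if_neg h, abs_zero]; exact abs_nonneg c

/-- `∫₀¹ 1{y<z₀}/(1-y) dy = 1` -/
lemma integral_g1 : ∫ y in Set.Icc (0:ℝ) 1, (if y < critPoint then 1 / (1 - y) else 0) = 1 := by
  have hz0 : 0 < critPoint := critPoint_pos
  have hz1 : critPoint < 1 := critPoint_lt_one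
  have hii := intervalIntegrable_of_bdd g1_meas g1_bdd
  rw [MeasureTheory.integral_Icc_eq_integral_Ioc, ← intervalIntegral.integral_of_le zero_le_one]
  rw [← intervalIntegral.integral_add_adjacent_intervals (hii 0 critPoint) (hii critPoint 1)]
  have h2 : ∫ y in critPoint..1, (if y < critPoint then 1 / (1 - y) else 0) = 0 := by
    rw [intervalIntegral.integral_congr (g := fun _ => (0:ℝ)) ?_, intervalIntegral.integral_zero]
    intro y hy
    rw [Set.uIcc_of_le hz1.le] at hy
    exact if_neg (not_lt.2 hy.1)
  have h1 : ∫ y in (0:ℝ)..critPoint, (if y < critPoint then 1 / (1 - y) else 0)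
      = ∫ y in (0:ℝ)..critPoint, (1 - y)⁻¹ := by
    refine intervalIntegral.integral_congr_ae ?_
    have hz : ∀ᵐ y : ℝ ∂volume, y ≠ critPoint :=
      (Set.countable_singleton critPoint).ae_notMem volume
    filter_upwards [hz] with y hy hmem
    rw [Set.uIoc_of_le hz0.le] at hmem
    rw [if_pos (lt_of_le_of_ne hmem.2 hy), one_div]
  have h3 : ∫ y in (0:ℝ)..critPoint, (1 - y)⁻¹ = 1 := by
    have := intervalIntegral.integral_comp_sub_left (a := 0) (b := critPoint)
      (fun u : ℝ => u⁻¹) 1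
    simp only [sub_zero] at this
    rw [this, integral_inv_of_pos (by rw [one_sub_critPoint]; positivity) one_pos,
      one_sub_critPoint]
    rw [one_div, inv_inv, Real.log_exp]
  rw [h1, h2, h3, add_zero]

/-- `∫₀¹ 1{y>m}/(1-m) dy = 1` for `0 ≤ m < 1` -/
lemma integral_g2 {m : ℝ} (hm0 : 0 ≤ m) (hm1 : m < 1) :
    ∫ y in Set.Icc (0:ℝ) 1, (if m < y then 1 / (1 - m) else 0) = 1 := by
  have hii := intervalIntegrable_of_bdd (g2_meas m (1/(1-m))) (g2_bdd m (1/(1-m)))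
  rw [MeasureTheory.integral_Icc_eq_integral_Ioc, ← intervalIntegral.integral_of_le zero_le_one]
  rw [← intervalIntegral.integral_add_adjacent_intervals (hii 0 m) (hii m 1)]
  have h1 : ∫ y in (0:ℝ)..m, (if m < y then 1 / (1 - m) else 0) = 0 := by
    rw [intervalIntegral.integral_congr (g := fun _ => (0:ℝ)) ?_, intervalIntegral.integral_zero]
    intro y hy
    rw [Set.uIcc_of_le hm0] at hy
    exact if_neg (not_lt.2 hy.2)
  have h2 : ∫ y in m..1, (if m < y then 1 / (1 - m) else 0) = 1 := by
    have : ∫ y in m..1, (if m < y then 1 / (1 - m) else 0)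
        = ∫ _y in m..1, 1 / (1 - m) := by
      refine intervalIntegral.integral_congr_ae (ae_of_all _ ?_)
      intro y hmem
      rw [Set.uIoc_of_le hm1.le] at hmem
      exact if_pos hmem.1
    rw [this, intervalIntegral.integral_const, smul_eq_mul, mul_one_div,
      div_self (by linarith : (1:ℝ) - m ≠ 0)]
  rw [h1, h2, zero_add]

/-- the key integral: conditional expectation of the increment is zero -/
lemma integral_step (xs : ℕ → ℝ) (n : ℕ) (hgood : ∀ i < n, xs i ∈ Set.Ico (0:ℝ) 1) :
    ∫ y in Set.Icc (0:ℝ) 1,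
      (Xproc (Function.update xs n y) critPoint (n + 1)
        - Xproc (Function.update xs n y) critPoint n) = 0 := by
  classical
  have hupd : ∀ y : ℝ, ∀ i < n, Function.update xs n y i = xs i := by
    intro y i hi
    exact Function.update_of_ne (by omega) _ _
  have hWsame : ∀ y, Wproc (Function.update xs n y) critPoint n = Wproc xs critPoint n :=
    fun y => Wproc_congr (hupd y)
  have hSsame : ∀ y, forgetMem {0} (Function.update xs n y) n = forgetMem {0} xs n :=
    fun y => forgetMem_congr (hupd y)
  by_cases hW : Wproc xs critPoint n = 0
  · have h0 : ∀ y : ℝ, Xproc (Function.update xs n y) critPoint (n + 1)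
        - Xproc (Function.update xs n y) critPoint n = 0 := by
      intro y
      rw [Xproc_succ_of_zero _ _ _ (by rw [hWsame y]; exact hW), sub_self]
    simp only [h0, MeasureTheory.integral_zero]
  · -- main case
    set S := forgetMem {0} xs n with hS
    have hne : S.Nonempty := forgetMem_nonempty xs n
    set m := S.min' hne with hm
    have hmS : m ∈ S := S.min'_mem hne
    have hmz : m < critPoint := min'_lt_of_Wne xs n hW
    have hm01 : m ∈ Set.Ico (0:ℝ) 1 := by
      have := forgetMem_subset xs n hmS
      rcases Finset.mem_insert.1 this with h | h
      · rw [h]; exact ⟨le_rfl, one_pos⟩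
      · obtain ⟨i, hi, hxi⟩ := Finset.mem_image.1 h
        rw [← hxi]
        exact hgood i (Finset.mem_range.1 hi)
    -- a.e. rewrite of the integrand
    have hae : ∀ᵐ y ∂(volume.restrict (Set.Icc (0:ℝ) 1)),
        Xproc (Function.update xs n y) critPoint (n + 1)
          - Xproc (Function.update xs n y) critPoint n
        = (if y < critPoint then 1 / (1 - y) else 0) - (if m < y then 1 / (1 - m) else 0) := by
      have hSnull : (volume.restrict (Set.Icc (0:ℝ) 1)) (↑S : Set ℝ) = 0 := by
        have h1 : volume (↑S : Set ℝ) = 0 := S.countable_toSet.measure_zero volume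
        exact le_antisymm (le_trans ((Measure.le_iff'.1 Measure.restrict_le_self) _) h1.le) zero_le
      have hnotS : ∀ᵐ y ∂(volume.restrict (Set.Icc (0:ℝ) 1)), y ∉ (↑S : Set ℝ) := by
        rw [MeasureTheory.ae_iff]
        simpa using hSnull
      filter_upwards [hnotS] with y hy
      set ys := Function.update xs n y with hys
      have hWy : Wproc ys critPoint n ≠ 0 := by rw [hWsame y]; exact hW
      have hyS : ys n ∉ forgetMem {0} ys n := by
        rw [hSsame y]
        simpa [hys, Function.update_self] using hy
      have hstep := Wproc_step ys n hWy hyS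
      have hmin : (forgetMem {0} ys n).min' (forgetMem_nonempty ys n) = m :=
        min'_congr (hSsame y) _ _
      rw [hmin] at hstep
      rw [Xproc_succ_of_ne _ _ _ hWy, hstep]
      simp only [hys, Function.update_self]
      ring
    rw [MeasureTheory.integral_congr_ae hae]
    have hint1 : IntegrableOn (fun y => if y < critPoint then 1 / (1 - y) else 0)
        (Set.Icc (0:ℝ) 1) volume := integrableOn_Icc_of_bdd g1_meas g1_bdd
    have hint2 : IntegrableOn (fun y => if m < y then 1 / (1 - m) else 0)
        (Set.Icc (0:ℝ) 1) volume :=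
      integrableOn_Icc_of_bdd (g2_meas m (1/(1-m))) (g2_bdd m (1/(1-m)))
    rw [MeasureTheory.integral_sub hint1 hint2, integral_g1, integral_g2 hm01.1 hm01.2, sub_self]

end ForgetAux
end Part4
section Part5
open Finset MeasureTheory ProbabilityTheory

namespace ForgetAux

lemma Xproc_bdd (n : ℕ) : ∃ C : ℝ, ∀ xs : ℕ → ℝ, |Xproc xs critPoint n| ≤ C := by
  refine ⟨(n+1) * Real.exp 1 + ∑ k ∈ Finset.range n, ((k+2) * Real.exp 1), fun xs => ?_⟩
  have hW : |Wproc xs critPoint n| ≤ (n+1) * Real.exp 1 := by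
    rw [abs_of_nonneg (Wproc_nonneg xs n)]
    exact_mod_cast Wproc_le xs n
  have hZ : |Zproc xs critPoint n| ≤ ∑ k ∈ Finset.range n, ((k:ℝ)+2) * Real.exp 1 := by
    refine (Finset.abs_sum_le_sum_abs _ _).trans (Finset.sum_le_sum fun k _ => ?_)
    by_cases h : Wproc xs critPoint k = 0
    · rw [if_pos h, abs_of_nonneg (Wproc_nonneg xs (k+1))]
      have := Wproc_le xs (k+1)
      have h2 : ((k:ℝ) + 1 + 1) * Real.exp 1 = ((k:ℝ)+2) * Real.exp 1 := by ring
      calc Wproc xs critPoint (k+1) ≤ ((k+1:ℕ) + 1 : ℝ) * Real.exp 1 := this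
        _ = ((k:ℝ)+2) * Real.exp 1 := by push_cast; ring
    · rw [if_neg h, abs_zero]
      positivity
  calc |Xproc xs critPoint n| ≤ |Wproc xs critPoint n| + |Zproc xs critPoint n| :=
        abs_sub _ _
    _ ≤ (n+1) * Real.exp 1 + ∑ k ∈ Finset.range n, ((k:ℝ)+2) * Real.exp 1 := by
        gcongr
    _ = _ := by push_cast; ring

variable {Ω : Type*} [MeasurableSpace Ω] (X : ℕ → Ω → ℝ)

/-- tuple of the first `n` inputs -/
def Vmap (n : ℕ) : Ω → (↥(Finset.range n) → ℝ) := fun ω i => X i ω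

lemma measurable_Vmap (hmeas : ∀ i, Measurable (X i)) (n : ℕ) : Measurable (Vmap X n) :=
  measurable_pi_lambda _ fun i => hmeas i

/-- splice a first-`n` tuple with a value `y` in all later coordinates -/
def extMap (n : ℕ) (v : ↥(Finset.range n) → ℝ) (y : ℝ) : ℕ → ℝ :=
  fun i => if h : i ∈ Finset.range n then v ⟨i, h⟩ else y

lemma measurable_extMap (n : ℕ) :
    Measurable fun p : (↥(Finset.range n) → ℝ) × ℝ => extMap n p.1 p.2 := by
  apply measurable_pi_lambda
  intro i
  by_cases h : i ∈ Finset.range n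
  · simp only [extMap, dif_pos h]
    exact (measurable_pi_apply _).comp measurable_fst
  · simp only [extMap, dif_neg h]
    exact measurable_snd

lemma measurable_comap_comp {α β γ : Type*} [mγ : MeasurableSpace γ] {mβ : MeasurableSpace β}
    (V : α → β) (G : β → γ) (hG : Measurable G) :
    Measurable[mβ.comap V] fun a => G (V a) := by
  intro t ht
  exact ⟨G ⁻¹' t, hG ht, rfl⟩

lemma natSigma_eq_comap (n : ℕ) :
    natSigma X n = MeasurableSpace.comap (Vmap X n) MeasurableSpace.pi := by
  apply le_antisymm
  · refine iSup₂_le fun i hi => ?_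
    have h1 : MeasurableSpace.comap (X i) inferInstance
        = ((inferInstance : MeasurableSpace ℝ).comap
            (fun v : ↥(Finset.range n) → ℝ => v ⟨i, hi⟩)).comap (Vmap X n) := by
      rw [MeasurableSpace.comap_comp]
      rfl
    rw [h1]
    refine MeasurableSpace.comap_mono ?_
    exact le_iSup (fun a : ↥(Finset.range n) =>
      ((inferInstance : MeasurableSpace ℝ).comap fun v : ↥(Finset.range n) → ℝ => v a)) ⟨i, hi⟩
  · show MeasurableSpace.comap (Vmap X n)
      (⨆ a : ↥(Finset.range n),
        ((inferInstance : MeasurableSpace ℝ).comap fun v : ↥(Finset.range n) → ℝ => v a))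
      ≤ natSigma X n
    rw [MeasurableSpace.comap_iSup]
    refine iSup_le fun a => ?_
    rw [MeasurableSpace.comap_comp]
    exact le_iSup₂ (f := fun i (_ : i ∈ Finset.range n) =>
      MeasurableSpace.comap (X i) inferInstance) a.1 a.2

end ForgetAux
end Part5

set_option maxHeartbeats 1600000 in
/-- The process `X(z₀,n) = W(z₀,n) − Z(z₀,n)`, with `z₀ = 1 − 1/e`, is a
martingale with respect to the natural filtration of the inputs of the forgetting process. -/
theorem Xproc_martingale {Ω : Type*} [MeasurableSpace Ω] (μ : Measure Ω)
    [IsProbabilityMeasure μ] (X : ℕ → Ω → ℝ)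
    (hmeas : ∀ i, Measurable (X i))
    (hindep : iIndepFun X μ)
    (hunif : ∀ i, Measure.map (X i) μ = volume.restrict (Set.Icc (0 : ℝ) 1)) :
    Martingale (fun n ω => Xproc (fun i => X i ω) critPoint n) (natFilt X hmeas) μ := by
  classical
  have hξ : Measurable fun ω : Ω => (fun i => X i ω) := measurable_pi_lambda _ hmeas
  have hfm : ∀ n, Measurable fun ω : Ω => Xproc (fun i => X i ω) critPoint n :=
    fun n => (ForgetAux.measurable_Xproc critPoint n).comp hξ
  have hint : ∀ n, Integrable (fun ω : Ω => Xproc (fun i => X i ω) critPoint n) μ := by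
    intro n
    obtain ⟨C, hC⟩ := ForgetAux.Xproc_bdd n
    exact ⟨(hfm n).aestronglyMeasurable,
      HasFiniteIntegral.of_bounded (C := C) (ae_of_all _ fun ω => by
        rw [Real.norm_eq_abs]; exact hC _)⟩
  have hadp : StronglyAdapted (natFilt X hmeas) (fun n ω => Xproc (fun i => X i ω) critPoint n) := by
    intro n
    have h1 : Measurable[natSigma X n]
        (fun ω => Xproc (ForgetAux.extMap n (ForgetAux.Vmap X n ω) 0) critPoint n) := by
      rw [ForgetAux.natSigma_eq_comap X n]
      exact ForgetAux.measurable_comap_comp (ForgetAux.Vmap X n)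
        (fun v => Xproc (ForgetAux.extMap n v 0) critPoint n)
        ((ForgetAux.measurable_Xproc critPoint n).comp
          ((ForgetAux.measurable_extMap n).comp (measurable_id.prodMk measurable_const)))
    have h2 : (fun ω => Xproc (fun i => X i ω) critPoint n)
        = fun ω => Xproc (ForgetAux.extMap n (ForgetAux.Vmap X n ω) 0) critPoint n := by
      funext ω
      refine ForgetAux.Xproc_congr fun i hi => ?_
      rw [ForgetAux.extMap, dif_pos (Finset.mem_range.2 hi)]
      rfl
    show StronglyMeasurable[natSigma X n] fun ω => Xproc (fun i => X i ω) critPoint n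
    rw [h2]
    exact h1.stronglyMeasurable
  refine martingale_nat hadp hint ?_
  intro n
  set V := ForgetAux.Vmap X n with hVdef
  have hVmeas : Measurable V := ForgetAux.measurable_Vmap X hmeas n
  set Ψ : ((↥(Finset.range n) → ℝ) × ℝ) → ℝ := fun p =>
    Xproc (ForgetAux.extMap n p.1 p.2) critPoint (n+1)
      - Xproc (ForgetAux.extMap n p.1 p.2) critPoint n with hΨdef
  have hΨm : Measurable Ψ :=
    ((ForgetAux.measurable_Xproc critPoint (n+1)).comp (ForgetAux.measurable_extMap n)).sub
      ((ForgetAux.measurable_Xproc critPoint n).comp (ForgetAux.measurable_extMap n))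
  obtain ⟨C1, hC1⟩ := ForgetAux.Xproc_bdd (n+1)
  obtain ⟨C0, hC0⟩ := ForgetAux.Xproc_bdd n
  have hΨbdd : ∀ p, |Ψ p| ≤ C1 + C0 := fun p =>
    (abs_sub _ _).trans (add_le_add (hC1 _) (hC0 _))
  have hpt : ∀ ω, Xproc (fun i => X i ω) critPoint (n+1) - Xproc (fun i => X i ω) critPoint n
      = Ψ (V ω, X n ω) := by
    intro ω
    have hcongr : ∀ k, k ≤ n + 1 → Xproc (fun i => X i ω) critPoint k
        = Xproc (ForgetAux.extMap n (V ω) (X n ω)) critPoint k := by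
      intro k hk
      refine ForgetAux.Xproc_congr fun i hi => ?_
      by_cases h : i ∈ Finset.range n
      · rw [ForgetAux.extMap, dif_pos h]; rfl
      · have hin : i = n := by
          simp only [Finset.mem_range] at h
          omega
        subst hin
        rw [ForgetAux.extMap, dif_neg h]
    simp only [hΨdef]
    rw [← hcongr (n+1) le_rfl, ← hcongr n (Nat.le_succ n)]
  have hdisj : Disjoint (Finset.range n) ({n} : Finset ℕ) := by
    simp [Finset.disjoint_singleton_right]
  have hIndep0 := hindep.indepFun_finset (Finset.range n) {n} hdisj hmeas
  have hIndep : IndepFun V (X n) μ := by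
    have h2 := hIndep0.comp measurable_id
      (measurable_pi_apply (⟨n, by simp⟩ : ↥({n} : Finset ℕ)))
    exact h2
  have hmap : μ.map (fun ω => (V ω, X n ω)) = (μ.map V).prod (μ.map (X n)) :=
    (ProbabilityTheory.indepFun_iff_map_prod_eq_prod_map_map hVmeas.aemeasurable
      (hmeas n).aemeasurable).1 hIndep
  haveI : IsProbabilityMeasure (μ.map V) := Measure.isProbabilityMeasure_map hVmeas.aemeasurable
  haveI : IsProbabilityMeasure (μ.map (X n)) := Measure.isProbabilityMeasure_map (hmeas n).aemeasurable
  have hinner : ∀ᵐ v ∂(μ.map V), ∫ y, Ψ (v, y) ∂(μ.map (X n)) = 0 := by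
    have hgood : ∀ᵐ v ∂(μ.map V), ∀ i : ↥(Finset.range n), v i ∈ Set.Ico (0:ℝ) 1 := by
      rw [MeasureTheory.ae_all_iff]
      intro i
      have hms : MeasurableSet {v : ↥(Finset.range n) → ℝ | ¬ v i ∈ Set.Ico (0:ℝ) 1} :=
        ((measurable_pi_apply i) measurableSet_Ico).compl
      rw [MeasureTheory.ae_iff, Measure.map_apply hVmeas hms]
      have hpre : V ⁻¹' {v | ¬ v i ∈ Set.Ico (0:ℝ) 1}
          = (X i.1) ⁻¹' (Set.Ico (0:ℝ) 1)ᶜ := rfl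
      rw [hpre, ← Measure.map_apply (hmeas i.1) measurableSet_Ico.compl, hunif i.1,
        Measure.restrict_apply measurableSet_Ico.compl]
      have hset : (Set.Ico (0:ℝ) 1)ᶜ ∩ Set.Icc 0 1 = {1} := by
        ext x
        simp only [Set.mem_inter_iff, Set.mem_compl_iff, Set.mem_Ico, Set.mem_Icc,
          Set.mem_singleton_iff, not_and, not_lt]
        constructor
        · rintro ⟨h1, h2, h3⟩; exact le_antisymm h3 (h1 h2)
        · rintro rfl; exact ⟨fun _ => le_rfl, zero_le_one, le_rfl⟩
      rw [hset]
      simp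
    filter_upwards [hgood] with v hv
    rw [hunif n]
    have hxs : ∀ i < n, ForgetAux.extMap n v 0 i ∈ Set.Ico (0:ℝ) 1 := by
      intro i hi
      rw [ForgetAux.extMap, dif_pos (Finset.mem_range.2 hi)]
      exact hv _
    have heq : ∀ y : ℝ, Ψ (v, y)
        = Xproc (Function.update (ForgetAux.extMap n v 0) n y) critPoint (n+1)
          - Xproc (Function.update (ForgetAux.extMap n v 0) n y) critPoint n := by
      intro y
      have hcoord : ∀ i < n + 1, ForgetAux.extMap n v y i
          = Function.update (ForgetAux.extMap n v 0) n y i := by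
        intro i hi
        by_cases h : i ∈ Finset.range n
        · have hin : i ≠ n := by
            have := Finset.mem_range.1 h; omega
          rw [Function.update_of_ne hin]
          simp only [ForgetAux.extMap, dif_pos h]
        · have hin : i = n := by
            simp only [Finset.mem_range] at h; omega
          subst hin
          rw [Function.update_self]
          simp only [ForgetAux.extMap, dif_neg h]
      simp only [hΨdef]
      rw [ForgetAux.Xproc_congr (z := critPoint) (n := n+1) hcoord,
        ForgetAux.Xproc_congr (z := critPoint) (n := n) (fun i hi => hcoord i (by omega))]
    calc ∫ y in Set.Icc (0:ℝ) 1, Ψ (v, y)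
        = ∫ y in Set.Icc (0:ℝ) 1,
            (Xproc (Function.update (ForgetAux.extMap n v 0) n y) critPoint (n+1)
              - Xproc (Function.update (ForgetAux.extMap n v 0) n y) critPoint n) := by
          exact MeasureTheory.integral_congr_ae (ae_of_all _ heq)
      _ = 0 := ForgetAux.integral_step _ n hxs
  refine ae_eq_condExp_of_forall_setIntegral_eq ((natFilt X hmeas).le n) (hint (n+1))
    (fun s _ _ => (hint n).integrableOn) (fun s hs _ => ?_)
    ((hadp n).aestronglyMeasurable)
  have hs' : MeasurableSet[MeasurableSpace.comap V MeasurableSpace.pi] s := by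
    rw [← ForgetAux.natSigma_eq_comap X n]; exact hs
  obtain ⟨B, hB, rfl⟩ := hs'
  have hsm0 : MeasurableSet (V ⁻¹' B) := hVmeas hB
  set Φ : ((↥(Finset.range n) → ℝ) × ℝ) → ℝ := fun p =>
    Set.indicator B (fun _ => (1:ℝ)) p.1 * Ψ p with hΦdef
  have hΦm : Measurable Φ :=
    ((measurable_const.indicator hB).comp measurable_fst).mul hΨm
  have hΦbdd : ∀ p, |Φ p| ≤ C1 + C0 := by
    intro p
    simp only [hΦdef]
    rw [abs_mul]
    by_cases h : p.1 ∈ B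
    · rw [Set.indicator_of_mem h]
      simpa using hΨbdd p
    · rw [Set.indicator_of_notMem h]
      simpa using (abs_nonneg (Ψ p)).trans (hΨbdd p)
  have hdiff : ∫ ω in V ⁻¹' B, (Xproc (fun i => X i ω) critPoint (n+1)
      - Xproc (fun i => X i ω) critPoint n) ∂μ = 0 := by
    have h1 : ∫ ω in V ⁻¹' B, (Xproc (fun i => X i ω) critPoint (n+1)
        - Xproc (fun i => X i ω) critPoint n) ∂μ = ∫ ω, Φ (V ω, X n ω) ∂μ := by
      rw [← MeasureTheory.integral_indicator hsm0]
      congr 1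
      funext ω
      simp only [hΦdef]
      by_cases h : V ω ∈ B
      · rw [Set.indicator_of_mem h, Set.indicator_of_mem (Set.mem_preimage.2 h), one_mul, hpt ω]
      · rw [Set.indicator_of_notMem h,
          Set.indicator_of_notMem (fun hc => h (Set.mem_preimage.1 hc)), zero_mul]
    have h2 : ∫ ω, Φ (V ω, X n ω) ∂μ = ∫ p, Φ p ∂(μ.map (fun ω => (V ω, X n ω))) :=
      (MeasureTheory.integral_map (hVmeas.prodMk (hmeas n)).aemeasurable
        hΦm.aestronglyMeasurable).symm
    have hΦint : Integrable Φ ((μ.map V).prod (μ.map (X n))) :=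
      ⟨hΦm.aestronglyMeasurable,
        HasFiniteIntegral.of_bounded (C := C1 + C0) (ae_of_all _ fun p => by
          rw [Real.norm_eq_abs]; exact hΦbdd p)⟩
    have h3 : ∫ p, Φ p ∂((μ.map V).prod (μ.map (X n)))
        = ∫ v, ∫ y, Φ (v, y) ∂(μ.map (X n)) ∂(μ.map V) :=
      MeasureTheory.integral_prod Φ hΦint
    have h4 : ∀ᵐ v ∂(μ.map V), ∫ y, Φ (v, y) ∂(μ.map (X n)) = 0 := by
      filter_upwards [hinner] with v hv
      simp only [hΦdef]
      rw [MeasureTheory.integral_const_mul, hv, mul_zero]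
    rw [h1, h2, hmap, h3, MeasureTheory.integral_congr_ae h4, MeasureTheory.integral_zero]
  have hsub := MeasureTheory.integral_sub ((hint (n+1)).integrableOn (s := V ⁻¹' B))
    ((hint n).integrableOn (s := V ⁻¹' B))
  rw [hsub] at hdiff
  linarith [hdiff]
end
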